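/- arXiv:1302.6097 — 7 statements merged into one kernel-verified Lean document; each statement's English description precedes it below -/
import Mathlib

section
/- Let n ≥ 2 and let f(x) = a_n x^n + … + a_1 x + a_0 ∈ ℤ[x] be a polynomial of degree n that is Eisenstein with respect to a prime p. Then p^{n−1} divides the resultant Res(f, f′) of f and its derivative f′. -/
open Polynomial Filter

/-- `f ∈ ℤ[x]` is Eisenstein with respect to the prime `p`:
`p ∣ aᵢ` for all `i` below the degree, `p² ∤ a₀` and `p ∤ aₙ`. -/
def IsEisensteinWith (f : Polynomial ℤ) (p : ℕ) : Prop :=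
  (∀ i < f.natDegree, (p : ℤ) ∣ f.coeff i) ∧ ¬ ((p : ℤ)^2 ∣ f.coeff 0) ∧
    ¬ ((p : ℤ) ∣ f.leadingCoeff)
/-- The Sylvester matrix of `f` and `g` (with respect to their natural degrees):
an `(n + m) × (n + m)` matrix (`m = deg f`, `n = deg g`) whose first `n` rows carry the
coefficients of `f` (leading coefficient first) shifted along, and whose last `m` rows
carry the coefficients of `g` likewise. -/
def sylvesterMatrix (f g : Polynomial ℤ) :
    Matrix (Fin (g.natDegree + f.natDegree)) (Fin (g.natDegree + f.natDegree)) ℤ :=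
  fun i j =>
    if (i : ℕ) < g.natDegree then
      if (i : ℕ) ≤ (j : ℕ) ∧ (j : ℕ) ≤ (i : ℕ) + f.natDegree then
        f.coeff (f.natDegree + i - j)
      else 0
    else
      if (i : ℕ) - g.natDegree ≤ (j : ℕ) ∧ (j : ℕ) ≤ (i : ℕ) - g.natDegree + g.natDegree then
        g.coeff (g.natDegree + ((i : ℕ) - g.natDegree) - j)
      else 0

/-- The resultant of `f` and `g`: the determinant of their Sylvester matrix. -/
def resultant (f g : Polynomial ℤ) : ℤ :=
  (sylvesterMatrix f g).det

/-- If `f ∈ ℤ[x]` has degree `n ≥ 2` and is Eisenstein with respect to a prime `p`,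
then `p^(n-1)` divides the resultant `Res(f, f')`. -/
theorem eisenstein_pow_dvd_resultant (n : ℕ) (hn : 2 ≤ n) (f : Polynomial ℤ)
    (hdeg : f.natDegree = n) (p : ℕ) (hp : p.Prime) (hE : IsEisensteinWith f p) :
    (p : ℤ)^(n - 1) ∣ _root_.resultant f (derivative f) := by
  have hm : (derivative f).natDegree = n - 1 := by
    have h := Polynomial.degree_derivative_eq f (by omega)
    rw [hdeg] at h
    exact Polynomial.natDegree_eq_of_degree_eq_some h
  -- divisibility of low coefficients
  have hf : ∀ k < n, (p : ℤ) ∣ f.coeff k := by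
    intro k hk; exact hE.1 k (by omega)
  have hg : ∀ k < n - 1, (p : ℤ) ∣ (derivative f).coeff k := by
    intro k hk
    rw [Polynomial.coeff_derivative]
    exact Dvd.dvd.mul_right (hf (k + 1) (by omega)) _
  -- all entries in columns `j ≥ n` are divisible by `p`
  have hcol : ∀ (i j : Fin ((derivative f).natDegree + f.natDegree)), n ≤ (j : ℕ) →
      (p : ℤ) ∣ sylvesterMatrix f (derivative f) i j := by
    intro i j hj
    have hiN : (i : ℕ) < (derivative f).natDegree + f.natDegree := i.isLt
    have hjN : (j : ℕ) < (derivative f).natDegree + f.natDegree := j.isLt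
    unfold sylvesterMatrix
    split
    · rename_i hi
      split
      · rename_i hij
        exact hf _ (by omega)
      · exact dvd_zero _
    · rename_i hi
      split
      · rename_i hij
        exact hg _ (by omega)
      · exact dvd_zero _
  -- factor out `p` from each of these columns
  set N := (derivative f).natDegree + f.natDegree with hN
  have hNval : N = (n - 1) + n := by rw [hN, hm, hdeg]
  set d : Fin N → ℤ := fun j => if n ≤ (j : ℕ) then (p : ℤ) else 1 with hd
  set B : Matrix (Fin N) (Fin N) ℤ := fun i j =>
    if n ≤ (j : ℕ) then sylvesterMatrix f (derivative f) i j / p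
    else sylvesterMatrix f (derivative f) i j with hB
  have hfac : sylvesterMatrix f (derivative f) = B * Matrix.diagonal d := by
    ext i j
    rw [Matrix.mul_diagonal, hB, hd]
    by_cases h : n ≤ (j : ℕ)
    · simp only [h, if_true]
      exact (Int.ediv_mul_cancel (hcol i j h)).symm
    · simp [h]
  have hprod : ∏ j : Fin N, d j = (p : ℤ) ^ (n - 1) := by
    rw [Fin.prod_univ_eq_prod_range (fun k => if n ≤ k then (p : ℤ) else 1) N]
    have : N = n + (n - 1) := by omega
    rw [this, Finset.prod_range_add]
    have h1 : ∏ i ∈ Finset.range n, (if n ≤ i then (p : ℤ) else 1) = 1 := by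
      apply Finset.prod_eq_one
      intro x hx
      rw [Finset.mem_range] at hx
      simp [Nat.not_le.mpr hx]
    have h2 : ∏ i ∈ Finset.range (n - 1), (if n ≤ n + i then (p : ℤ) else 1)
        = (p : ℤ) ^ (n - 1) := by
      rw [Finset.prod_congr rfl (fun x _ => if_pos (Nat.le_add_right n x)), Finset.prod_const,
        Finset.card_range]
    rw [h1, h2, one_mul]
  have : _root_.resultant f (derivative f) = B.det * (p : ℤ) ^ (n - 1) := by
    rw [_root_.resultant, hfac, Matrix.det_mul, Matrix.det_diagonal, hprod]
  rw [this]
  exact Dvd.intro_left _ rfl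
end

section
/- Suppose f ∈ ℤ[x] has degree n ≥ 2 and f is a shifted Eisenstein polynomial. Then there exists a prime p with p^{n−1} ∣ Res(f, f′), and, letting q be the largest prime such that q^{n−1} ∣ Res(f, f′), there exists an integer s with 0 ≤ s < q such that f(x + s) is an Eisenstein polynomial. -/
open Polynomial Filter Finset

/-- `f` is an Eisenstein polynomial: it is Eisenstein with respect to some prime. -/
def IsEisenstein (f : Polynomial ℤ) : Prop :=
  ∃ p : ℕ, p.Prime ∧ IsEisensteinWith f p
private lemma taylor_coeff_sum (r : ℤ) (P : Polynomial ℤ) (d u : ℕ) (hP : P.natDegree < d) :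
    (taylor r P).coeff u = ∑ t ∈ Finset.range d, P.coeff t * (taylor r ((X : Polynomial ℤ) ^ t)).coeff u := by
  conv_lhs => rw [P.as_sum_range' d hP]
  rw [map_sum, finset_sum_coeff]
  refine Finset.sum_congr rfl fun t _ => ?_
  rw [← C_mul_X_pow_eq_monomial, ← smul_eq_C_mul, map_smul, coeff_smul, smul_eq_mul]

private lemma coeff_mul_X_pow_ite (g : Polynomial ℤ) (e t : ℕ) :
    (g * X ^ e).coeff t = if e ≤ t ∧ t ≤ e + g.natDegree then g.coeff (t - e) else 0 := by
  rw [coeff_mul_X_pow']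
  by_cases h1 : e ≤ t
  · by_cases h2 : t ≤ e + g.natDegree
    · rw [if_pos h1, if_pos ⟨h1, h2⟩]
    · rw [if_pos h1, if_neg (fun h => h2 h.2), coeff_eq_zero_of_natDegree_lt (by omega)]
  · rw [if_neg h1, if_neg (fun h => h1 h.1)]

private lemma ite_coeff_eq (g : Polynomial ℤ) (P Q : Prop) [Decidable P] [Decidable Q] (a b : ℕ)
    (hPQ : P ↔ Q) (hab : P → a = b) :
    (if P then g.coeff a else 0) = (if Q then g.coeff b else 0) := by
  by_cases h : P
  · rw [if_pos h, if_pos (hPQ.1 h), hab h]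
  · rw [if_neg h, if_neg (fun hq => h (hPQ.2 hq))]

private lemma key_dvd (f : Polynomial ℤ) (n p : ℕ) (hn : 2 ≤ n) (hp : p.Prime)
    (hdeg : f.natDegree = n) (s : ℤ)
    (hcoeff : ∀ m < n, (p:ℤ) ∣ (f.comp (X + C s)).coeff m) :
    (p:ℤ)^(n-1) ∣ _root_.resultant f (derivative f) := by
  have hf0 : f ≠ 0 := fun h => by rw [h, natDegree_zero] at hdeg; omega
  have hlc : f.coeff n ≠ 0 := by
    rw [← hdeg]; exact leadingCoeff_ne_zero.mpr hf0
  have hm : (derivative f).natDegree = n - 1 := by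
    refine natDegree_eq_of_le_of_coeff_ne_zero ?_ ?_
    · have := natDegree_derivative_le f; omega
    · rw [coeff_derivative]
      have h1 : n - 1 + 1 = n := by omega
      rw [h1]
      have h2 : ((n - 1 : ℕ) : ℤ) + 1 ≠ 0 := by positivity
      exact mul_ne_zero hlc h2
  -- hypotheses about shifted coefficients
  have hg : ∀ m < n, (p:ℤ) ∣ (taylor s f).coeff m := by
    intro m hmn; rw [taylor_apply]; exact hcoeff m hmn
  have hg' : ∀ m, m + 1 < n → (p:ℤ) ∣ (taylor s (derivative f)).coeff m := by
    intro m hmn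
    have hder : taylor s (derivative f) = derivative (taylor s f) := by
      rw [taylor_apply, taylor_apply, derivative_comp]; simp
    rw [hder, coeff_derivative]
    exact Dvd.dvd.mul_right (hg (m+1) hmn) _
  set M := sylvesterMatrix f (derivative f) with hM
  -- row polynomials
  set Q : Fin ((derivative f).natDegree + f.natDegree) → Polynomial ℤ := fun i =>
    if (i : ℕ) < n - 1 then f * X ^ (n - 2 - (i : ℕ)) else derivative f * X ^ (2*n - 2 - (i : ℕ))
    with hQ
  have hrow : ∀ i j, M i j = (Q i).coeff (2*n - 2 - (j : ℕ)) := by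
    intro i j
    have hi : (i : ℕ) < (n-1) + n := by have := i.isLt; omega
    have hj : (j : ℕ) < (n-1) + n := by have := j.isLt; omega
    rw [hM, hQ]
    simp only [sylvesterMatrix, hm, hdeg]
    by_cases hcase : (i : ℕ) < n - 1
    · rw [if_pos hcase, if_pos hcase, coeff_mul_X_pow_ite]
      exact ite_coeff_eq f _ _ _ _ (by constructor <;> (intro h; omega)) (fun h => by omega)
    · rw [if_neg hcase, if_neg hcase, coeff_mul_X_pow_ite]
      exact ite_coeff_eq (derivative f) _ _ _ _ (by constructor <;> (intro h; omega)) (fun h => by omega)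
  have hQdeg : ∀ i, (Q i).natDegree < (n-1) + n := by
    intro i
    simp only [hQ]
    by_cases hcase : (i : ℕ) < n - 1
    · rw [if_pos hcase]
      calc (f * X ^ (n - 2 - (i:ℕ))).natDegree ≤ f.natDegree + (X ^ (n - 2 - (i:ℕ)) : Polynomial ℤ).natDegree :=
        natDegree_mul_le
      _ < (n-1) + n := by rw [natDegree_X_pow]; omega
    · rw [if_neg hcase]
      calc (derivative f * X ^ (2*n - 2 - (i:ℕ))).natDegree ≤
          (derivative f).natDegree + (X ^ (2*n - 2 - (i:ℕ)) : Polynomial ℤ).natDegree :=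
        natDegree_mul_le
      _ < (n-1) + n := by
          rw [natDegree_X_pow]
          have := i.isLt
          omega
  -- the change of basis matrix
  set B : Matrix (Fin ((derivative f).natDegree + f.natDegree))
      (Fin ((derivative f).natDegree + f.natDegree)) ℤ := fun j k =>
    (taylor s ((X : Polynomial ℤ) ^ (2*n - 2 - (j : ℕ)))).coeff (2*n - 2 - (k : ℕ)) with hB
  have hNval : (derivative f).natDegree + f.natDegree = (n-1) + n := by rw [hm, hdeg]
  have hBtri : B.BlockTriangular id := by
    intro j k hkj
    simp only [id_eq] at hkj
    rw [hB]
    have hk : (k : ℕ) < (j : ℕ) := hkj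
    have hj : (j : ℕ) < (n-1) + n := by have := j.isLt; omega
    refine coeff_eq_zero_of_natDegree_lt ?_
    rw [natDegree_taylor, natDegree_X_pow]
    omega
  have hBdiag : ∀ j, B j j = 1 := by
    intro j
    rw [hB]
    simp only
    rw [taylor_apply, X_pow_comp, coeff_X_add_C_pow]
    simp
  have hBdet : B.det = 1 := by
    rw [Matrix.det_of_upperTriangular hBtri]
    exact Finset.prod_eq_one fun j _ => hBdiag j
  -- (M*B) entries
  have hMB : ∀ i k, (M * B) i k = (taylor s (Q i)).coeff (2*n - 2 - (k : ℕ)) := by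
    intro i k
    have hu := taylor_coeff_sum s (Q i) ((derivative f).natDegree + f.natDegree)
        (2*n - 2 - (k:ℕ)) (by rw [hNval]; exact hQdeg i)
    rw [Matrix.mul_apply, hu, ← Finset.sum_range_reflect, ← Fin.sum_univ_eq_sum_range
        (fun j => (Q i).coeff ((derivative f).natDegree + f.natDegree - 1 - j) *
          ((taylor s) ((X : Polynomial ℤ) ^ ((derivative f).natDegree + f.natDegree - 1 - j))).coeff
            (2*n - 2 - (k:ℕ)))]
    refine Finset.sum_congr rfl fun j _ => ?_
    rw [hrow i j]
    simp only [hB]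
    have harg : 2*n - 2 - (j:ℕ) = (derivative f).natDegree + f.natDegree - 1 - (j:ℕ) := by
      have := j.isLt; omega
    rw [harg]
  -- column divisibility
  have hcol : ∀ (k : Fin ((derivative f).natDegree + f.natDegree)), n ≤ (k : ℕ) →
      ∀ i, (p:ℤ) ∣ (M * B) i k := by
    intro k hk i
    rw [hMB]
    have hku : 2*n - 2 - (k : ℕ) ≤ n - 2 := by omega
    simp only [hQ]
    by_cases hcase : (i : ℕ) < n - 1
    · rw [if_pos hcase, taylor_mul, coeff_mul]
      refine Finset.dvd_sum fun ab hab => ?_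
      rw [Finset.HasAntidiagonal.mem_antidiagonal] at hab
      exact Dvd.dvd.mul_right (hg ab.1 (by omega)) _
    · rw [if_neg hcase, taylor_mul, coeff_mul]
      refine Finset.dvd_sum fun ab hab => ?_
      rw [Finset.HasAntidiagonal.mem_antidiagonal] at hab
      exact Dvd.dvd.mul_right (hg' ab.1 (by omega)) _
  -- factor out p from the last n-1 columns
  set v : Fin ((derivative f).natDegree + f.natDegree) → ℤ := fun j =>
    if n ≤ (j : ℕ) then (p:ℤ) else 1 with hv
  set A : Matrix (Fin ((derivative f).natDegree + f.natDegree))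
      (Fin ((derivative f).natDegree + f.natDegree)) ℤ := fun i j =>
    if n ≤ (j : ℕ) then (M * B) i j / p else (M * B) i j with hA
  have hp0 : (p:ℤ) ≠ 0 := by exact_mod_cast hp.ne_zero
  have hfact : M * B = Matrix.of (fun i j => v j * A i j) := by
    ext i j
    rw [hv, hA]
    simp only [Matrix.of_apply]
    by_cases hcase : n ≤ (j : ℕ)
    · rw [if_pos hcase, if_pos hcase, Int.mul_ediv_cancel' (hcol j hcase i)]
    · rw [if_neg hcase, if_neg hcase, one_mul]
  have hprod : (∏ j, v j) = (p:ℤ)^(n-1) := by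
    have e1 : (∏ j, v j)
        = ∏ j ∈ Finset.range ((derivative f).natDegree + f.natDegree),
            (if n ≤ j then (p:ℤ) else 1) := by
      simp only [hv]
      exact Fin.prod_univ_eq_prod_range (fun j => if n ≤ j then (p:ℤ) else 1)
        ((derivative f).natDegree + f.natDegree)
    have e2 := Finset.prod_range_mul_prod_Ico (fun j => if n ≤ j then (p:ℤ) else 1)
        (show n ≤ (derivative f).natDegree + f.natDegree by omega)
    have e3 : (∏ j ∈ Finset.range n, if n ≤ j then (p:ℤ) else 1) = 1 :=
      Finset.prod_eq_one fun j hj => if_neg (by have := Finset.mem_range.mp hj; omega)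
    have e4 : (∏ j ∈ Finset.Ico n ((derivative f).natDegree + f.natDegree),
          if n ≤ j then (p:ℤ) else 1)
        = ∏ _j ∈ Finset.Ico n ((derivative f).natDegree + f.natDegree), (p:ℤ) :=
      Finset.prod_congr rfl fun j hj => if_pos (Finset.mem_Ico.mp hj).1
    rw [e1, ← e2, e3, one_mul, e4, Finset.prod_const, Nat.card_Ico]
    congr 1
    omega
  have hdet : _root_.resultant f (derivative f) = (p:ℤ)^(n-1) * A.det := by
    have h1 : _root_.resultant f (derivative f) = M.det * B.det := by
      rw [_root_.resultant, hM, hBdet, mul_one]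
    rw [h1, ← Matrix.det_mul, hfact, Matrix.det_mul_row, hprod]
  rw [hdet]
  exact Dvd.intro _ rfl

private lemma eis_shift (g : Polynomial ℤ) (p : ℕ) (hp : p.Prime) (hdeg2 : 2 ≤ g.natDegree)
    (h : IsEisensteinWith g p) (k : ℤ) :
    IsEisensteinWith (g.comp (X + C ((p:ℤ) * k))) p := by
  set n := g.natDegree with hn
  set t : ℤ := (p:ℤ) * k with ht
  have hpt : (p:ℤ) ∣ t := ⟨k, rfl⟩
  have hnd : (g.comp (X + C t)).natDegree = n := by
    rw [natDegree_comp, natDegree_X_add_C, mul_one]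
  have htay : g.comp (X + C t) = taylor t g := (taylor_apply t g).symm
  refine ⟨?_, ?_, ?_⟩
  · intro i hi
    rw [hnd] at hi
    rw [htay, taylor_coeff_sum t g (n+1) i (by omega)]
    refine Finset.dvd_sum fun m hm => ?_
    rcases Nat.lt_or_ge m n with hmn | hmn
    · exact Dvd.dvd.mul_right (h.1 m hmn) _
    · have hmn' : m = n := by
        simp only [Finset.mem_range] at hm; omega
      subst hmn'
      rw [taylor_apply, X_pow_comp, coeff_X_add_C_pow]
      refine Dvd.dvd.mul_left (Dvd.dvd.mul_right ?_ _) _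
      exact dvd_pow hpt (by omega)
  · rw [htay, taylor_coeff_zero]
    intro hdvd
    apply h.2.1
    have heval : g.eval t = ∑ m ∈ range (n + 1), g.coeff m * t ^ m :=
      eval_eq_sum_range' (by omega) t
    rw [Finset.sum_range_succ'] at heval
    have hsum : (p:ℤ)^2 ∣ ∑ m ∈ range n, g.coeff (m+1) * t^(m+1) := by
      refine Finset.dvd_sum fun m _ => ?_
      rcases Nat.eq_zero_or_pos m with hm0 | hm0
      · subst hm0
        rw [pow_one, sq]
        exact mul_dvd_mul (h.1 1 (by omega)) hpt
      · refine Dvd.dvd.mul_left ?_ _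
        calc ((p:ℤ)^2) ∣ t^2 := pow_dvd_pow_of_dvd hpt 2
        _ ∣ t^(m+1) := pow_dvd_pow t (by omega)
    have : g.coeff 0 * t ^ 0 = g.eval t - ∑ m ∈ range n, g.coeff (m+1) * t^(m+1) := by
      rw [heval]; ring
    rw [pow_zero, mul_one] at this
    rw [this]
    exact dvd_sub hdvd hsum
  · rw [leadingCoeff_comp (by rw [natDegree_X_add_C]; omega)]
    simp only [leadingCoeff_X_add_C, one_pow, mul_one]
    exact h.2.2

/-- If `f` of degree `n ≥ 2` is a shifted Eisenstein polynomial, then some prime `p` satisfies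
`p^(n-1) ∣ Res(f, f')`, and if `q` is the largest such prime then `f(x + s)` is an Eisenstein
polynomial for some integer `s` with `0 ≤ s < q`. -/
theorem shifted_eisenstein_small_shift (n : ℕ) (hn : 2 ≤ n) (f : Polynomial ℤ)
    (hdeg : f.natDegree = n) (hshift : ∃ s : ℤ, IsEisenstein (f.comp (X + C s))) :
    (∃ p : ℕ, p.Prime ∧ (p : ℤ)^(n - 1) ∣ _root_.resultant f (derivative f)) ∧
    ∀ q : ℕ, q.Prime → (q : ℤ)^(n - 1) ∣ _root_.resultant f (derivative f) →
      (∀ r : ℕ, r.Prime → (r : ℤ)^(n - 1) ∣ _root_.resultant f (derivative f) → r ≤ q) →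
      ∃ s : ℤ, 0 ≤ s ∧ s < (q : ℤ) ∧ IsEisenstein (f.comp (X + C s)) := by
  classical
  obtain ⟨s₀, p, hp, heis⟩ := hshift
  have hnd : (f.comp (X + C s₀)).natDegree = n := by
    rw [natDegree_comp, natDegree_X_add_C, mul_one, hdeg]
  have hcoeff : ∀ m < n, (p:ℤ) ∣ (f.comp (X + C s₀)).coeff m := by
    intro m hm
    exact heis.1 m (by rw [hnd]; exact hm)
  have hkey := key_dvd f n p hn hp hdeg s₀ hcoeff
  refine ⟨⟨p, hp, hkey⟩, ?_⟩
  intro q hq _ hmax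
  have hpq : p ≤ q := hmax p hp hkey
  have hp0 : (0:ℤ) < (p:ℕ) := by exact_mod_cast hp.pos
  refine ⟨s₀ % (p:ℤ), Int.emod_nonneg s₀ (ne_of_gt hp0), ?_, ?_⟩
  · calc s₀ % (p:ℤ) < (p:ℤ) := Int.emod_lt_of_pos s₀ hp0
      _ ≤ (q:ℤ) := by exact_mod_cast hpq
  · have hcompeq : f.comp (X + C (s₀ % (p:ℤ)))
        = (f.comp (X + C s₀)).comp (X + C ((p:ℤ) * (-(s₀ / (p:ℤ))))) := by
      rw [comp_assoc]
      congr 1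
      rw [add_comp, X_comp, C_comp]
      rw [show (X : Polynomial ℤ) + C ((p:ℤ) * (-(s₀ / (p:ℤ)))) + C s₀
          = X + C ((p:ℤ) * (-(s₀ / (p:ℤ))) + s₀) by rw [C_add]; ring]
      congr 2
      rw [Int.emod_def]
      ring
    rw [hcompeq]
    exact ⟨p, hp, eis_shift (f.comp (X + C s₀)) p hp (by omega) heis (-(s₀ / (p:ℤ)))⟩
end

section
/- Let f = a_n x^n + … + a_1 x + a_0 ∈ ℤ[x] be a polynomial of degree n ≥ 2. Then |Res(f, f′)| ≤ |a_n| · n^n · L(f)^{2n−2}, where f′ is the derivative of f. -/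
open Polynomial Filter

/-- Length of an integer polynomial: the sum of the absolute values of its coefficients. -/
def polyLength (f : Polynomial ℤ) : ℤ :=
  ∑ i ∈ Finset.range (f.natDegree + 1), |f.coeff i|
lemma abs_det_le_prod_rowSum {m : ℕ} (A : Matrix (Fin m) (Fin m) ℤ) (c : Fin m → ℤ)
    (h : ∀ i, ∑ j, |A i j| ≤ c i) : |A.det| ≤ ∏ i, c i := by
  have key : |A.det| ≤ ∏ i, ∑ j, |A i j| := by
    rw [← Matrix.det_transpose, Matrix.det_apply]
    refine le_trans (Finset.abs_sum_le_sum_abs _ _) ?_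
    calc ∑ σ : Equiv.Perm (Fin m), |Equiv.Perm.sign σ • ∏ i, A.transpose (σ i) i|
        ≤ ∑ σ : Equiv.Perm (Fin m), ∏ i, |A i (σ i)| := by
          apply Finset.sum_le_sum
          intro σ _
          rcases Int.units_eq_one_or (Equiv.Perm.sign σ) with hs | hs <;>
            simp [hs, Finset.abs_prod, Matrix.transpose_apply]
      _ = ∑ g ∈ Finset.univ.image (fun σ : Equiv.Perm (Fin m) => (σ : Fin m → Fin m)),
            ∏ i, |A i (g i)| := by
          rw [Finset.sum_image]
          intro x _ y _ hxy
          exact Equiv.coe_fn_injective hxy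
      _ ≤ ∑ g ∈ Fintype.piFinset (fun _ : Fin m => (Finset.univ : Finset (Fin m))),
            ∏ i, |A i (g i)| := by
          apply Finset.sum_le_sum_of_subset_of_nonneg
          · intro g _
            simp [Fintype.mem_piFinset]
          · intros
            exact Finset.prod_nonneg fun _ _ => abs_nonneg _
      _ = ∏ i, ∑ j, |A i j| := by rw [Finset.prod_univ_sum]
  refine key.trans (Finset.prod_le_prod (fun i _ => ?_) (fun i _ => h i))
  exact Finset.sum_nonneg fun _ _ => abs_nonneg _

lemma det_pivot {m : ℕ} (A : Matrix (Fin m) (Fin m) ℤ) (i0 j0 : Fin m)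
    (h : ∀ i, i ≠ i0 → A i j0 = 0) :
    A.det = A i0 j0 * (A.updateRow i0 (Pi.single j0 1)).det := by
  have hrow : A i0 = ∑ j, A i0 j • Pi.single j (1:ℤ) := by
    funext x
    simp [Pi.single_apply]
  have hsum : ∀ t : Finset (Fin m),
      (A.updateRow i0 (∑ j ∈ t, A i0 j • Pi.single j (1:ℤ))).det
        = ∑ j ∈ t, A i0 j * (A.updateRow i0 (Pi.single j (1:ℤ))).det := by
    intro t
    induction t using Finset.induction with
    | empty =>
        simp only [Finset.sum_empty]
        exact Matrix.det_eq_zero_of_row_eq_zero i0 (by simp)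
    | @insert k t hk ih =>
        rw [Finset.sum_insert hk, Finset.sum_insert hk, Matrix.det_updateRow_add,
          Matrix.det_updateRow_smul, ih]
  conv_lhs => rw [← Matrix.updateRow_eq_self A i0, hrow]
  rw [hsum]
  rw [Finset.sum_eq_single j0]
  · intro j _ hj
    have : (A.updateRow i0 (Pi.single j (1:ℤ))).det = 0 := by
      apply Matrix.det_eq_zero_of_column_eq_zero j0
      intro i
      by_cases hi : i = i0
      · subst hi
        simp [Pi.single_apply, hj]
      · simp [Matrix.updateRow_ne hi, h i hi]
    rw [this, mul_zero]
  · simp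

lemma sum_window (v : ℕ → ℤ) (i s d : ℕ) (hd : i + s < d) :
    ∑ j ∈ Finset.range d, |if i ≤ j ∧ j ≤ i + s then v (s + i - j) else 0|
      = ∑ k ∈ Finset.range (s + 1), |v k| := by
  rw [← Finset.sum_subset (s₁ := Finset.Ico i (i + s + 1))
      (h := fun j hj => by rw [Finset.mem_Ico] at hj; rw [Finset.mem_range]; omega)]
  · rw [Finset.sum_Ico_eq_sum_range]
    have h1 : i + s + 1 - i = s + 1 := by omega
    rw [h1, ← Finset.sum_range_reflect]
    apply Finset.sum_congr rfl
    intro k hk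
    rw [Finset.mem_range] at hk
    have hc : i ≤ i + (s + 1 - 1 - k) ∧ i + (s + 1 - 1 - k) ≤ i + s := by omega
    rw [if_pos hc]
    congr 2
    omega
  · intro j _ hj
    rw [Finset.mem_Ico] at hj
    rw [if_neg (by omega), abs_zero]

/-- Row-sum bounds used for the Sylvester matrix of `f` and `f'`. -/
def cfun (n : ℕ) (L : ℤ) (t : ℕ) : ℤ :=
  if t = 0 then 1 else if t < n - 1 then L else (n:ℤ) * L

/-- Mahler's bound: for `f ∈ ℤ[x]` of degree `n ≥ 2`,
`|Res(f, f')| ≤ |aₙ| · nⁿ · L(f)^(2n-2)`. -/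
theorem abs_resultant_le (n : ℕ) (hn : 2 ≤ n) (f : Polynomial ℤ) (hdeg : f.natDegree = n) :
    |_root_.resultant f (derivative f)| ≤ |f.leadingCoeff| * (n : ℤ)^n * (polyLength f)^(2*n - 2) := by
  have hf0 : f ≠ 0 := by
    intro h
    rw [h, natDegree_zero] at hdeg
    omega
  have han : f.coeff n ≠ 0 := by
    rw [← hdeg, coeff_natDegree]
    exact leadingCoeff_ne_zero.mpr hf0
  have hd' : (derivative f).natDegree = n - 1 := by
    have h1 : (derivative f).natDegree ≤ n - 1 := by
      have := natDegree_derivative_le f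
      omega
    have h2 : n - 1 ≤ (derivative f).natDegree := by
      apply le_natDegree_of_ne_zero
      rw [coeff_derivative, show n - 1 + 1 = n from by omega]
      intro hc
      rcases mul_eq_zero.mp hc with h | h
      · exact han h
      · have h3 : (0:ℤ) < ((n - 1 : ℕ) : ℤ) + 1 := by positivity
        omega
    omega
  set L := polyLength f with hLdef
  have hL : L = ∑ k ∈ Finset.range (n + 1), |f.coeff k| := by
    rw [hLdef, polyLength, hdeg]
  have hD : (derivative f).natDegree + f.natDegree = (n - 1) + n := by rw [hd', hdeg]
  set M := sylvesterMatrix f (derivative f) with hM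
  have hres : _root_.resultant f (derivative f) = M.det := by rw [hM]; rfl
  set r0 : Fin ((derivative f).natDegree + f.natDegree) := ⟨0, by omega⟩ with hr0
  set r1 : Fin ((derivative f).natDegree + f.natDegree) := ⟨n - 1, by omega⟩ with hr1
  have hval0 : (r0:ℕ) = 0 := rfl
  have hval1 : (r1:ℕ) = n - 1 := rfl
  have hr1ne : r1 ≠ r0 := by
    intro h
    have := congrArg (Fin.val) h
    omega
  have hM1 : ∀ i j : Fin ((derivative f).natDegree + f.natDegree), (i:ℕ) < n - 1 →
      M i j = if (i:ℕ) ≤ (j:ℕ) ∧ (j:ℕ) ≤ (i:ℕ) + n then f.coeff (n + (i:ℕ) - (j:ℕ)) else 0 := by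
    intro i j hi
    rw [hM]
    simp only [sylvesterMatrix]
    simp only [hd', hdeg]
    rw [if_pos hi]
  have hM2 : ∀ i j : Fin ((derivative f).natDegree + f.natDegree), n - 1 ≤ (i:ℕ) →
      M i j = if (i:ℕ) - (n-1) ≤ (j:ℕ) ∧ (j:ℕ) ≤ (i:ℕ) - (n-1) + (n-1) then
          (derivative f).coeff ((n-1) + ((i:ℕ) - (n-1)) - (j:ℕ)) else 0 := by
    intro i j hi
    rw [hM]
    simp only [sylvesterMatrix]
    simp only [hd', hdeg]
    rw [if_neg (by omega)]
  set M' := M.updateRow r1 (M r1 + (-(n:ℤ)) • M r0) with hM'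
  have hMr0r0 : M r0 r0 = f.coeff n := by
    rw [hM1 r0 r0 (by omega), if_pos (by omega), hval0]
    norm_num
  have hMr1r0 : M r1 r0 = f.coeff n * (((n - 1 : ℕ) : ℤ) + 1) := by
    rw [hM2 r1 r0 (by omega), if_pos (by omega)]
    rw [show (n-1) + (((r1:ℕ)) - (n-1)) - (r0:ℕ) = n - 1 from by omega]
    rw [coeff_derivative, show n - 1 + 1 = n from by omega]
  have hcast : ((n - 1 : ℕ) : ℤ) + 1 = (n:ℤ) := by omega
  have hcol : ∀ i, i ≠ r0 → M' i r0 = 0 := by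
    intro i hi
    have hival : (i:ℕ) ≠ 0 := by
      intro h
      exact hi (Fin.ext (by omega))
    by_cases h1 : (i:ℕ) = n - 1
    · have hir : i = r1 := Fin.ext (by omega)
      subst hir
      rw [hM', Matrix.updateRow_self]
      simp only [Pi.add_apply, Pi.smul_apply, smul_eq_mul]
      rw [hMr1r0, hMr0r0, hcast]
      ring
    · have hine : i ≠ r1 := by
        intro h
        rw [h] at h1
        exact h1 hval1
      rw [hM', Matrix.updateRow_ne hine]
      by_cases h2 : (i:ℕ) < n - 1
      · rw [hM1 i r0 h2, if_neg (by omega)]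
      · rw [hM2 i r0 (by omega), if_neg (by omega)]
  have hdetM' : M'.det = M.det := by
    rw [hM']
    exact Matrix.det_updateRow_add_smul_self M hr1ne (-(n:ℤ))
  set B := M'.updateRow r0 (Pi.single r0 1) with hB
  have hpivot : M' r0 r0 = f.coeff n := by
    rw [hM', Matrix.updateRow_ne (Ne.symm hr1ne)]
    exact hMr0r0
  have key : M.det = f.coeff n * B.det := by
    rw [← hdetM', det_pivot M' r0 r0 hcol, hpivot, ← hB]
  -- row sum bounds
  have hrow : ∀ i, ∑ j, |B i j| ≤ cfun n L (i:ℕ) := by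
    intro i
    by_cases h0 : i = r0
    · subst h0
      have step : ∑ j, |B r0 j| = 1 := by
        calc ∑ j, |B r0 j| = ∑ j, |Pi.single r0 (1:ℤ) j| := by
              apply Finset.sum_congr rfl
              intro j _
              rw [hB, Matrix.updateRow_self]
          _ = ∑ j, if j = r0 then (1:ℤ) else 0 := by
              apply Finset.sum_congr rfl
              intro j _
              rw [Pi.single_apply]
              by_cases h : j = r0 <;> simp [h]
          _ = 1 := by simp
      rw [step, cfun, if_pos hval0]
    · have hBi : B i = M' i := by rw [hB, Matrix.updateRow_ne h0]
      have hival : (i:ℕ) ≠ 0 := by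
        intro h
        exact h0 (Fin.ext (by omega))
      by_cases h1 : i = r1
      · -- the modified row
        subst h1
        have hcv : cfun n L (r1:ℕ) = (n:ℤ) * L := by
          rw [cfun, if_neg (by omega), if_neg (by omega)]
        rw [hcv]
        have hBr1 : ∀ j : Fin ((derivative f).natDegree + f.natDegree),
            B r1 j = M r1 j + (-(n:ℤ)) * M r0 j := by
          intro j
          rw [hBi, hM', Matrix.updateRow_self]
          simp
        have hMr0row : ∀ j : Fin ((derivative f).natDegree + f.natDegree),
            M r0 j = if 0 ≤ (j:ℕ) ∧ (j:ℕ) ≤ 0 + n then f.coeff (n + 0 - (j:ℕ)) else 0 := by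
          intro j
          rw [hM1 r0 j (by omega), hval0]
        have hMr1row : ∀ j : Fin ((derivative f).natDegree + f.natDegree),
            M r1 j = if 0 ≤ (j:ℕ) ∧ (j:ℕ) ≤ 0 + (n-1) then
              (derivative f).coeff ((n-1) + 0 - (j:ℕ)) else 0 := by
          intro j
          rw [hM2 r1 j (by omega), hval1, Nat.sub_self]
        have hptw : ∀ j : Fin ((derivative f).natDegree + f.natDegree),
            |B r1 j| ≤ (n:ℤ) *
              |if 0 ≤ (j:ℕ) ∧ (j:ℕ) ≤ 0 + n then f.coeff (n + 0 - (j:ℕ)) else 0| := by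
          intro j
          rw [hBr1, hMr0row, hMr1row]
          split_ifs with hc1 hc2 hc2
          · -- j ≤ n - 1
            rw [coeff_derivative, show (n-1) + 0 - (j:ℕ) + 1 = n + 0 - (j:ℕ) from by omega]
            set x := f.coeff (n + 0 - (j:ℕ)) with hx
            have hrw : x * ((((n-1) + 0 - (j:ℕ) : ℕ) : ℤ) + 1) + (-(n:ℤ)) * x
                = x * (((((n-1) + 0 - (j:ℕ) : ℕ) : ℤ) + 1) - n) := by ring
            rw [hrw, abs_mul, mul_comm ((n:ℤ)) |x|]
            apply mul_le_mul_of_nonneg_left _ (abs_nonneg x)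
            have hj2 : ((((n-1) + 0 - (j:ℕ) : ℕ) : ℤ) + 1) - n = -((j:ℕ):ℤ) := by omega
            rw [hj2, abs_neg, Int.abs_natCast]
            exact Nat.cast_le.mpr (by omega : (j:ℕ) ≤ n)
          · omega
          · -- j = n
            rw [zero_add, abs_mul, abs_neg, Int.abs_natCast]
          · simp
        calc ∑ j, |B r1 j|
            ≤ ∑ j : Fin ((derivative f).natDegree + f.natDegree), (n:ℤ) *
              |if (0:ℕ) ≤ (j:ℕ) ∧ (j:ℕ) ≤ 0 + n then f.coeff (n + 0 - (j:ℕ)) else 0| :=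
              Finset.sum_le_sum (fun j _ => hptw j)
          _ = (n:ℤ) * ∑ j : Fin ((derivative f).natDegree + f.natDegree),
              |if (0:ℕ) ≤ (j:ℕ) ∧ (j:ℕ) ≤ 0 + n then f.coeff (n + 0 - (j:ℕ)) else 0| := by
              rw [Finset.mul_sum]
          _ = (n:ℤ) * ∑ j ∈ Finset.range ((derivative f).natDegree + f.natDegree),
              |if (0:ℕ) ≤ j ∧ j ≤ 0 + n then f.coeff (n + 0 - j) else 0| := by
              rw [Fin.sum_univ_eq_sum_range
                (fun j => |if (0:ℕ) ≤ j ∧ j ≤ 0 + n then f.coeff (n + 0 - j) else 0|)]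
          _ = (n:ℤ) * L := by
              rw [sum_window f.coeff 0 n _ (by omega), hL]
      · -- rows of M other than r0, r1
        rw [hBi, hM', Matrix.updateRow_ne h1]
        by_cases h2 : (i:ℕ) < n - 1
        · -- a coefficient row of f
          have hcv : cfun n L (i:ℕ) = L := by
            rw [cfun, if_neg hival, if_pos h2]
          rw [hcv]
          apply le_of_eq
          calc ∑ j, |M i j|
              = ∑ j : Fin ((derivative f).natDegree + f.natDegree),
                |if (i:ℕ) ≤ (j:ℕ) ∧ (j:ℕ) ≤ (i:ℕ) + n then f.coeff (n + (i:ℕ) - (j:ℕ)) else 0| := by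
                apply Finset.sum_congr rfl
                intro j _
                rw [hM1 i j h2]
            _ = ∑ j ∈ Finset.range ((derivative f).natDegree + f.natDegree),
                |if (i:ℕ) ≤ j ∧ j ≤ (i:ℕ) + n then f.coeff (n + (i:ℕ) - j) else 0| := by
                rw [Fin.sum_univ_eq_sum_range
                  (fun j => |if (i:ℕ) ≤ j ∧ j ≤ (i:ℕ) + n then f.coeff (n + (i:ℕ) - j) else 0|)]
            _ = L := by
                rw [sum_window f.coeff (i:ℕ) n _ (by omega), hL]
        · -- a coefficient row of f'
          have hcv : cfun n L (i:ℕ) = (n:ℤ) * L := by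
            rw [cfun, if_neg hival, if_neg h2]
          rw [hcv]
          have hge : n - 1 ≤ (i:ℕ) := by omega
          calc ∑ j, |M i j|
              = ∑ j : Fin ((derivative f).natDegree + f.natDegree),
                |if (i:ℕ) - (n-1) ≤ (j:ℕ) ∧ (j:ℕ) ≤ (i:ℕ) - (n-1) + (n-1) then
                  (derivative f).coeff ((n-1) + ((i:ℕ) - (n-1)) - (j:ℕ)) else 0| := by
                apply Finset.sum_congr rfl
                intro j _
                rw [hM2 i j (by omega)]
            _ = ∑ j ∈ Finset.range ((derivative f).natDegree + f.natDegree),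
                |if (i:ℕ) - (n-1) ≤ j ∧ j ≤ (i:ℕ) - (n-1) + (n-1) then
                  (derivative f).coeff ((n-1) + ((i:ℕ) - (n-1)) - j) else 0| := by
                rw [Fin.sum_univ_eq_sum_range
                  (fun j => |if (i:ℕ) - (n-1) ≤ j ∧ j ≤ (i:ℕ) - (n-1) + (n-1) then
                    (derivative f).coeff ((n-1) + ((i:ℕ) - (n-1)) - j) else 0|)]
            _ = ∑ t ∈ Finset.range ((n-1) + 1), |(derivative f).coeff t| := by
                have hlt : (i:ℕ) - (n-1) + (n-1) < (derivative f).natDegree + f.natDegree := by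
                  have := i.isLt
                  omega
                rw [sum_window (derivative f).coeff ((i:ℕ) - (n-1)) (n-1) _ hlt]
            _ ≤ (n:ℤ) * L := by
                rw [show (n-1) + 1 = n from by omega]
                calc ∑ t ∈ Finset.range n, |(derivative f).coeff t|
                    ≤ ∑ t ∈ Finset.range n, (n:ℤ) * |f.coeff (t+1)| := by
                      apply Finset.sum_le_sum
                      intro t ht
                      rw [Finset.mem_range] at ht
                      rw [coeff_derivative, abs_mul, mul_comm]
                      apply mul_le_mul_of_nonneg_right _ (abs_nonneg _)
                      rw [abs_of_nonneg (by positivity)]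
                      omega
                  _ = (n:ℤ) * ∑ t ∈ Finset.range n, |f.coeff (t+1)| := by
                      rw [Finset.mul_sum]
                  _ ≤ (n:ℤ) * L := by
                      apply mul_le_mul_of_nonneg_left _ (by positivity)
                      rw [hL, Finset.sum_range_succ']
                      have : (0:ℤ) ≤ |f.coeff 0| := abs_nonneg _
                      omega
  have hbd : |B.det| ≤ ∏ i : Fin ((derivative f).natDegree + f.natDegree), cfun n L (i:ℕ) :=
    abs_det_le_prod_rowSum B (fun i => cfun n L (i:ℕ)) hrow
  have hprod : ∏ i : Fin ((derivative f).natDegree + f.natDegree), cfun n L (i:ℕ)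
      = (n:ℤ)^n * L^(2*n-2) := by
    rw [Fin.prod_univ_eq_prod_range (cfun n L)]
    rw [hD, Finset.prod_range_add]
    have h2 : (∏ i ∈ Finset.range n, cfun n L ((n-1) + i)) = ((n:ℤ)*L)^n := by
      rw [Finset.prod_congr rfl (g := fun _ => (n:ℤ)*L)
        (fun i _ => by rw [cfun, if_neg (by omega), if_neg (by omega)]),
        Finset.prod_const, Finset.card_range]
    have h1 : (∏ i ∈ Finset.range (n-1), cfun n L i) = L^(n-2) := by
      rw [show n - 1 = (n-2)+1 from by omega, Finset.prod_range_succ']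
      rw [Finset.prod_congr rfl (g := fun _ => L) (fun i hi => by
          rw [Finset.mem_range] at hi
          rw [cfun, if_neg (by omega), if_pos (by omega)]),
        Finset.prod_const, Finset.card_range]
      rw [show cfun n L 0 = 1 from by rw [cfun, if_pos rfl], mul_one]
    rw [h1, h2, mul_pow, show 2*n-2 = (n-2) + n from by omega, pow_add]
    ring
  have hlc : f.coeff n = f.leadingCoeff := by
    rw [← hdeg, coeff_natDegree]
  calc |_root_.resultant f (derivative f)| = |f.coeff n| * |B.det| := by
        rw [hres, key, abs_mul]
    _ ≤ |f.coeff n| * ((n:ℤ)^n * L^(2*n-2)) := by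
        apply mul_le_mul_of_nonneg_left _ (abs_nonneg _)
        rw [← hprod]
        exact hbd
    _ = |f.leadingCoeff| * (n:ℤ)^n * L^(2*n-2) := by
        rw [hlc]
        ring
end

section
/- For every integer n ≥ 2, ρ_n − τ_n > 0, i.e. τ_n < ρ_n. -/
open Polynomial Filter

/-- `ρₙ = 1 - ∏_p (1 - (p-1)²/pⁿ⁺²)`, the product running over all primes. -/
noncomputable def rho (n : ℕ) : ℝ :=
  1 - ∏' p : Nat.Primes, (1 - ((p : ℕ) - 1 : ℝ)^2 / ((p : ℕ) : ℝ)^(n + 2))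
/-- `τₙ = (∑_p (p-1)²/pⁿ⁺²)² - ∑_p (p-1)⁴/p²ⁿ⁺⁴`, the sums running over all primes. -/
noncomputable def tau (n : ℕ) : ℝ :=
  (∑' p : Nat.Primes, ((p : ℕ) - 1 : ℝ)^2 / ((p : ℕ) : ℝ)^(n + 2))^2
    - ∑' p : Nat.Primes, ((p : ℕ) - 1 : ℝ)^4 / ((p : ℕ) : ℝ)^(2*n + 4)

/-- For every `n ≥ 2`, `ρₙ - τₙ > 0`. -/
theorem tau_lt_rho (n : ℕ) (hn : 2 ≤ n) : tau n < rho n := by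
  set f : Nat.Primes → ℝ :=
    fun p => ((p : ℕ) - 1 : ℝ)^2 / ((p : ℕ) : ℝ)^(n + 2) with hf_def
  -- basic per-prime facts
  have hq2 : ∀ p : Nat.Primes, (2 : ℝ) ≤ ((p : ℕ) : ℝ) := by
    intro p; exact_mod_cast p.2.two_le
  have hf_nonneg : ∀ p : Nat.Primes, 0 ≤ f p := by
    intro p; have := hq2 p; positivity
  have hf_le_sq : ∀ p : Nat.Primes, f p ≤ 1 / ((p : ℕ) : ℝ)^2 := by
    intro p
    set q : ℝ := ((p : ℕ) : ℝ) with hq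
    have h2 : (2:ℝ) ≤ q := hq2 p
    have hq0 : (0:ℝ) < q := by linarith
    have hpow : q ^ 2 ≤ q ^ n := pow_le_pow_right₀ (by linarith) hn
    have hnum : (q - 1)^2 ≤ q^2 := by nlinarith
    rw [div_le_div_iff₀ (by positivity) (by positivity)]
    calc (q - 1)^2 * q^2 ≤ q^2 * q^2 := by nlinarith
      _ ≤ q^n * q^2 := by nlinarith [pow_pos hq0 2]
      _ = q^(n+2) := by rw [← pow_add]
      _ = 1 * q^(n+2) := (one_mul _).symm
  have hf_le_quarter : ∀ p : Nat.Primes, f p ≤ 1/4 := by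
    intro p
    refine (hf_le_sq p).trans ?_
    have h2 : (2:ℝ) ≤ ((p : ℕ) : ℝ) := hq2 p
    rw [div_le_div_iff₀ (by positivity) (by norm_num)]
    nlinarith
  -- the dominating function on ℕ
  set g : ℕ → ℝ := fun k =>
    1/(k:ℝ)^2 - (if k = 1 then 1 else 0) - (if k = 2 then (3:ℝ)/16 else 0) with hg_def
  have hg_hasSum : HasSum g (Real.pi^2/6 - 1 - 3/16) :=
    (hasSum_zeta_two.sub (hasSum_ite_eq 1 1)).sub (hasSum_ite_eq 2 (3/16))
  have hfg : ∀ p : Nat.Primes, f p ≤ g ((p : ℕ)) := by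
    intro p
    by_cases h2 : (p : ℕ) = 2
    · have hfp : f p = 1 / (2:ℝ)^(n+2) := by
        simp only [hf_def, h2]; norm_num
      have hg2 : g ((p : ℕ)) = 1/16 := by
        rw [h2]; norm_num [hg_def]
      rw [hfp, hg2]
      have h16 : (16:ℝ) ≤ (2:ℝ)^(n+2) := by
        calc (16:ℝ) = 2^4 := by norm_num
          _ ≤ 2^(n+2) := pow_le_pow_right₀ (by norm_num) (by omega)
      exact div_le_div_of_nonneg_left (by norm_num) (by norm_num) h16
    · have h1 : (p : ℕ) ≠ 1 := p.2.one_lt.ne'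
      simp only [hg_def, if_neg h1, if_neg h2, sub_zero]
      exact hf_le_sq p
  have hg_nonneg : ∀ c : ℕ, c ∉ Set.range (fun p : Nat.Primes => (p : ℕ)) → 0 ≤ g c := by
    intro c hc
    have h2 : c ≠ 2 := by
      rintro rfl; exact hc ⟨⟨2, Nat.prime_two⟩, rfl⟩
    by_cases h1 : c = 1
    · subst h1; simp [hg_def]
    · simp only [hg_def, if_neg h1, if_neg h2, sub_zero]
      positivity
  have hinj : Function.Injective (fun p : Nat.Primes => (p : ℕ)) :=
    Nat.Primes.coe_nat_injective
  -- summability of f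
  have hgf_summable : Summable (fun p : Nat.Primes => g ((p : ℕ))) :=
    hg_hasSum.summable.comp_injective hinj
  have hf_summable : Summable f :=
    Summable.of_nonneg_of_le hf_nonneg hfg hgf_summable
  set S : ℝ := ∑' p : Nat.Primes, f p with hS_def
  have hS_pos : 0 < S := by
    refine Summable.tsum_pos hf_summable hf_nonneg ⟨2, Nat.prime_two⟩ ?_
    have : f ⟨2, Nat.prime_two⟩ = 1 / (2:ℝ)^(n+2) := by
      simp only [hf_def]; norm_num
    rw [this]; positivity
  have hS_le : S ≤ Real.pi^2/6 - 1 - 3/16 := by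
    rw [hS_def, ← hg_hasSum.tsum_eq]
    exact Summable.tsum_le_tsum_of_inj _ hinj hg_nonneg hfg hf_summable hg_hasSum.summable
  have hpi_lt : Real.pi < 3.15 := Real.pi_lt_d2
  have hpi_pos : 0 < Real.pi := Real.pi_pos
  have hS_lt : S < 0.467 := by nlinarith
  -- positivity of 1 - f p
  have h1f_pos : ∀ p : Nat.Primes, 0 < 1 - f p := by
    intro p; have := hf_le_quarter p; linarith
  -- summability of the logs
  have hlog_le : ∀ p : Nat.Primes, Real.log (1 - f p) ≤ -f p := by
    intro p
    have := Real.log_le_sub_one_of_pos (h1f_pos p)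
    linarith
  have hneg_log_le : ∀ p : Nat.Primes, -Real.log (1 - f p) ≤ 2 * f p := by
    intro p
    have hx4 := hf_le_quarter p
    have hx0 := hf_nonneg p
    have hpos := h1f_pos p
    have hinv := Real.log_le_sub_one_of_pos (inv_pos.mpr hpos)
    rw [Real.log_inv] at hinv
    have hprod : (1 - f p) * (1 - f p)⁻¹ = 1 := mul_inv_cancel₀ hpos.ne'
    have hinvle : (1 - f p)⁻¹ ≤ 2 := by
      rw [inv_le_comm₀ hpos (by norm_num)]; linarith
    nlinarith
  have hneglog_summable : Summable (fun p : Nat.Primes => -Real.log (1 - f p)) := by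
    apply Summable.of_nonneg_of_le
      (fun p => by have := hlog_le p; have := hf_nonneg p; linarith)
      hneg_log_le (hf_summable.mul_left 2)
  have hlog_summable : Summable (fun p : Nat.Primes => Real.log (1 - f p)) := by
    simpa using hneglog_summable.neg
  -- the product is exp of the sum of logs
  have hprod_eq : Real.exp (∑' p : Nat.Primes, Real.log (1 - f p))
      = ∏' p : Nat.Primes, (1 - f p) := by
    exact Real.rexp_tsum_eq_tprod (fun p => h1f_pos p) hlog_summable
  -- bound on the sum of logs
  have hlogsum_le : (∑' p : Nat.Primes, Real.log (1 - f p)) ≤ -S := by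
    have := Summable.tsum_le_tsum hlog_le hlog_summable hf_summable.neg
    rwa [tsum_neg] at this
  have hP_le : (∏' p : Nat.Primes, (1 - f p)) ≤ Real.exp (-S) := by
    rw [← hprod_eq]; exact Real.exp_le_exp.mpr hlogsum_le
  -- quadratic bound on exp(-S)
  have habs : |(-S)| ≤ 1 := by rw [abs_neg, abs_of_nonneg hS_pos.le]; linarith
  have hexp := Real.exp_bound habs (n := 3) (by norm_num)
  have hsum3 : (∑ i ∈ Finset.range 3, (-S)^i / (Nat.factorial i : ℝ))
      = 1 - S + S^2/2 := by
    simp [Finset.sum_range_succ, Nat.factorial]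
    ring
  rw [hsum3] at hexp
  have habs3 : |(-S)|^3 * ((3:ℕ).succ / ((Nat.factorial 3 : ℕ) * (3:ℕ))) = 2/9 * S^3 := by
    rw [abs_neg, abs_of_nonneg hS_pos.le]
    norm_num [Nat.factorial]
    ring
  rw [habs3] at hexp
  have hexp_le : Real.exp (-S) ≤ 1 - S + S^2/2 + 2/9 * S^3 := by
    have := abs_le.mp hexp
    linarith [this.2]
  -- bound tau
  have htau_le : tau n ≤ S^2 := by
    rw [tau]
    have hnn : 0 ≤ ∑' p : Nat.Primes, ((p : ℕ) - 1 : ℝ)^4 / ((p : ℕ) : ℝ)^(2*n + 4) := by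
      apply tsum_nonneg
      intro p
      have := hq2 p
      positivity
    have : (∑' p : Nat.Primes, ((p : ℕ) - 1 : ℝ)^2 / ((p : ℕ) : ℝ)^(n + 2)) = S := rfl
    rw [this]
    linarith
  -- bound rho
  have hrho_ge : S - S^2/2 - 2/9 * S^3 ≤ rho n := by
    rw [rho]
    have : (∏' p : Nat.Primes, (1 - ((p : ℕ) - 1 : ℝ)^2 / ((p : ℕ) : ℝ)^(n + 2)))
        = ∏' p : Nat.Primes, (1 - f p) := rfl
    rw [this]
    have := hP_le.trans hexp_le
    linarith
  -- final numeric comparison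
  have hfinal : S^2 < S - S^2/2 - 2/9 * S^3 := by
    nlinarith [mul_pos hS_pos hS_pos, sq_nonneg S,
      mul_nonneg (mul_nonneg hS_pos.le hS_pos.le) hS_pos.le,
      mul_nonneg (sub_nonneg.mpr hS_lt.le) hS_pos.le,
      mul_nonneg (mul_nonneg (sub_nonneg.mpr hS_lt.le) hS_pos.le) hS_pos.le]
  linarith [htau_le, hrho_ge, hfinal]
end

section
/- For every integer n ≥ 2, the set of polynomials of degree n over ℤ that are irreducible but are not shifted Eisenstein polynomials is infinite. -/
open Polynomial Filter

-- irreducibility transfers from the reverse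
lemma irreducible_of_irreducible_reverse (f : Polynomial ℤ) (h0 : f.coeff 0 ≠ 0)
    (hd : f.natDegree ≠ 0) (hrev : Irreducible f.reverse) : Irreducible f := by
  have key : ∀ g : Polynomial ℤ, IsUnit g.reverse → g.coeff 0 ≠ 0 → IsUnit g := by
    intro g hu hg0
    obtain ⟨r, hr, hcr⟩ := Polynomial.isUnit_iff.1 hu
    have hdg : g.natDegree = 0 := by
      by_contra hdgn
      have h1 : g.reverse.coeff g.natDegree = g.coeff 0 := by
        rw [coeff_reverse, revAt_le (le_refl _), Nat.sub_self]
      rw [← hcr, coeff_C, if_neg hdgn] at h1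
      exact hg0 h1.symm
    have : g = C (g.coeff 0) := eq_C_of_natDegree_eq_zero hdg
    rw [this] at hu ⊢
    rwa [reverse_C] at hu
  constructor
  · intro h; exact hd (natDegree_eq_zero_of_isUnit h)
  · intro g h hgh
    have hc : g.coeff 0 * h.coeff 0 = f.coeff 0 := by rw [hgh, mul_coeff_zero]
    have hg0 : g.coeff 0 ≠ 0 := fun e => h0 (by rw [← hc, e, zero_mul])
    have hh0 : h.coeff 0 ≠ 0 := fun e => h0 (by rw [← hc, e, mul_zero])
    have hrf : f.reverse = g.reverse * h.reverse := by
      rw [hgh, reverse_mul_of_domain]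
    rcases hrev.isUnit_or_isUnit hrf with hu | hu
    · exact Or.inl (key g hu hg0)
    · exact Or.inr (key h hu hh0)

-- Eisenstein wrapper
lemma eisenstein_irreducible (q : ℕ) (hq : q.Prime) (E : Polynomial ℤ) (hmo : E.Monic)
    (hdeg : 0 < E.natDegree) (hco : ∀ i < E.natDegree, (q : ℤ) ∣ E.coeff i)
    (h0 : ¬ ((q : ℤ)^2 ∣ E.coeff 0)) : Irreducible E := by
  have hqZ : Prime (q : ℤ) := Nat.prime_iff_prime_int.mp hq
  have hdeg' : E.degree = E.natDegree := degree_eq_natDegree hmo.ne_zero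
  apply Polynomial.irreducible_of_eisenstein_criterion
    (P := Ideal.span {(q : ℤ)})
  · exact (Ideal.span_singleton_prime hqZ.ne_zero).2 hqZ
  · rw [Ideal.mem_span_singleton, hmo.leadingCoeff]
    exact fun h => hqZ.not_unit (isUnit_of_dvd_one h)
  · intro i hi
    rw [Ideal.mem_span_singleton]
    exact hco i (by exact_mod_cast hdeg' ▸ hi)
  · rw [hdeg']; exact_mod_cast hdeg
  · rwa [Ideal.span_singleton_pow, Ideal.mem_span_singleton]
  · exact hmo.isPrimitive


lemma fam1_deg (q n : ℕ) (hq : q ≠ 0) (hn : 3 ≤ n) :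
    (C (q:ℤ) * X^n + (C (q:ℤ) * X + 1)).natDegree = n := by
  compute_degree
  · simp only [if_neg (by omega : ¬ n = 1), if_neg (by omega : ¬ n = 0)]
    exact_mod_cast by simpa using hq
  all_goals omega

lemma fam1_rev (q n : ℕ) (hq : q ≠ 0) (hn : 3 ≤ n) :
    (C (q:ℤ) * X^n + (C (q:ℤ) * X + 1)).reverse
      = X^n + C (q:ℤ) * X^(n-1) + C (q:ℤ) := by
  unfold Polynomial.reverse
  rw [fam1_deg q n hq hn]
  have h : C (q:ℤ) * X^n + (C (q:ℤ) * X + 1)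
      = C (q:ℤ) * X^n + C (q:ℤ) * X^1 + C (1:ℤ) * X^0 := by
    rw [map_one, pow_one, pow_zero, mul_one, add_assoc]
  rw [h, reflect_add, reflect_add, reflect_C_mul_X_pow, reflect_C_mul_X_pow,
    reflect_C_mul_X_pow, revAt_le (le_refl n), revAt_le (by omega : 1 ≤ n),
    revAt_le (by omega : 0 ≤ n), Nat.sub_self, Nat.sub_zero]
  simp
  ring

lemma E1_natDegree (q n : ℕ) (hn : 3 ≤ n) :
    (X^n + C (q:ℤ) * X^(n-1) + C (q:ℤ)).natDegree = n := by
  compute_degree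
  all_goals omega

lemma E1_monic (q n : ℕ) (hn : 3 ≤ n) :
    (X^n + C (q:ℤ) * X^(n-1) + C (q:ℤ)).Monic := by
  rw [add_assoc]
  apply monic_X_pow_add
  apply lt_of_le_of_lt (degree_add_le _ _)
  apply max_lt
  · exact lt_of_le_of_lt (degree_C_mul_X_pow_le _ _) (by exact_mod_cast by omega)
  · exact lt_of_le_of_lt (degree_C_le) (by exact_mod_cast by omega)

lemma E1_coeff (q n : ℕ) (hn : 3 ≤ n) (i : ℕ) :
    (X^n + C (q:ℤ) * X^(n-1) + C (q:ℤ)).coeff i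
      = (if i = n then 1 else 0) + (if i = n - 1 then (q:ℤ) else 0)
        + (if i = 0 then (q:ℤ) else 0) := by
  simp [coeff_add, coeff_X_pow, coeff_C, eq_comm]

lemma E1_irred (q n : ℕ) (hq : q.Prime) (hn : 3 ≤ n) :
    Irreducible (X^n + C (q:ℤ) * X^(n-1) + C (q:ℤ)) := by
  have h2 : (2:ℤ) ≤ q := by exact_mod_cast hq.two_le
  apply eisenstein_irreducible q hq
  · exact E1_monic q n hn
  · rw [E1_natDegree q n hn]; omega
  · intro i hi
    rw [E1_natDegree q n hn] at hi
    rw [E1_coeff q n hn, if_neg (by omega)]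
    split_ifs <;> simp
  · rw [E1_coeff q n hn, if_neg (by omega), if_neg (by omega), if_pos rfl]
    intro h
    simp only [zero_add] at h
    have := Int.le_of_dvd (by positivity) h
    nlinarith

lemma fam1_coeff (q n : ℕ) (hn : 3 ≤ n) (i : ℕ) :
    (C (q:ℤ) * X^n + (C (q:ℤ) * X + 1)).coeff i
      = (if i = n then (q:ℤ) else 0) + ((if i = 1 then (q:ℤ) else 0)
        + if i = 0 then 1 else 0) := by
  simp only [coeff_add, coeff_C_mul, coeff_X_pow, coeff_X, coeff_one]
  split_ifs <;> omega

lemma fam1_irred (q n : ℕ) (hq : q.Prime) (hn : 3 ≤ n) :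
    Irreducible (C (q:ℤ) * X^n + (C (q:ℤ) * X + 1)) := by
  apply irreducible_of_irreducible_reverse
  · rw [fam1_coeff q n hn, if_neg (by omega), if_neg (by omega), if_pos rfl]
    norm_num
  · rw [fam1_deg q n hq.ne_zero hn]; omega
  · rw [fam1_rev q n hq.ne_zero hn]
    exact E1_irred q n hq hn


lemma fam1_not (q n : ℕ) (hq : q.Prime) (hn : 3 ≤ n) (s : ℤ) :
    ¬ IsEisenstein ((C (q:ℤ) * X^n + (C (q:ℤ) * X + 1)).comp (X + C s)) := by
  rintro ⟨p, hp, hco, h0, hlead⟩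
  set f : Polynomial ℤ := C (q:ℤ) * X^n + (C (q:ℤ) * X + 1) with hf
  have hdf : f.natDegree = n := fam1_deg q n hq.ne_zero hn
  have hcomp : f.comp (X + C s) = C (q:ℤ) * (X + C s)^n + (C (q:ℤ) * (X + C s) + 1) := by
    simp [hf]
  have hdg : (f.comp (X + C s)).natDegree = n := by
    rw [natDegree_comp, hdf, natDegree_X_add_C, mul_one]
  have hgl : (f.comp (X + C s)).leadingCoeff = (q:ℤ) := by
    rw [leadingCoeff_comp (by rw [natDegree_X_add_C]; omega), leadingCoeff_X_add_C, one_pow,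
      mul_one, leadingCoeff, hdf, fam1_coeff q n hn, if_pos rfl, if_neg (by omega),
      if_neg (by omega)]
    ring
  have hch : (n.choose (n-1) : ℤ) = (n : ℤ) := by
    rw [Nat.choose_symm (by omega : 1 ≤ n), Nat.choose_one_right]
  have hXCs : ∀ i, 2 ≤ i → (X + C s).coeff i = 0 := by
    intro i hi
    rw [coeff_add, coeff_C, if_neg (by omega), coeff_X, if_neg (by omega), add_zero]
  have c1 : (f.comp (X + C s)).coeff (n-1) = (q:ℤ) * (s * n) := by
    rw [hcomp, coeff_add, coeff_add, coeff_C_mul, coeff_C_mul, coeff_X_add_C_pow,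
      (by omega : n - (n-1) = 1), pow_one, hch, hXCs (n-1) (by omega),
      coeff_one, if_neg (by omega : ¬ (n-1) = 0)]
    ring
  have c2 : (f.comp (X + C s)).coeff 1 = (q:ℤ) * (s^(n-1) * n + 1) := by
    rw [hcomp, coeff_add, coeff_add, coeff_C_mul, coeff_C_mul, coeff_X_add_C_pow,
      coeff_one, if_neg one_ne_zero, coeff_add, coeff_X_one, coeff_C, if_neg one_ne_zero]
    rw [Nat.choose_one_right]
    push_cast
    ring
  have hpZ : Prime ((p:ℕ) : ℤ) := Nat.prime_iff_prime_int.mp hp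
  have hnq : ¬ ((p:ℤ) ∣ (q:ℤ)) := by rwa [hgl] at hlead
  have d1 := hco (n-1) (by rw [hdg]; omega)
  have d2 := hco 1 (by rw [hdg]; omega)
  rw [c1] at d1
  rw [c2] at d2
  have d1' : (p:ℤ) ∣ s * n := (hpZ.dvd_mul.mp d1).resolve_left hnq
  have d2' : (p:ℤ) ∣ s^(n-1) * n + 1 := (hpZ.dvd_mul.mp d2).resolve_left hnq
  have dmul : (p:ℤ) ∣ s^(n-1) * n := by
    rcases hpZ.dvd_mul.mp d1' with hs | hn'
    · exact dvd_mul_of_dvd_left (dvd_pow hs (by omega)) _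
    · exact Dvd.dvd.mul_left hn' _
  have : (p:ℤ) ∣ 1 := (dvd_add_right dmul).mp d2'
  exact hpZ.not_dvd_one this

lemma fam2_deg (q : ℕ) (hq : q ≠ 0) :
    (C (q:ℤ) * X^2 + 1).natDegree = 2 := by
  compute_degree!

lemma fam2_coeff (q : ℕ) (i : ℕ) :
    (C (q:ℤ) * X^2 + 1).coeff i
      = (if i = 2 then (q:ℤ) else 0) + (if i = 0 then 1 else 0) := by
  simp only [coeff_add, coeff_C_mul, coeff_X_pow, coeff_one]
  split_ifs <;> omega

lemma fam2_rev (q : ℕ) (hq : q ≠ 0) :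
    (C (q:ℤ) * X^2 + 1).reverse = X^2 + C (q:ℤ) := by
  unfold Polynomial.reverse
  rw [fam2_deg q hq]
  have h : C (q:ℤ) * X^2 + 1 = C (q:ℤ) * X^2 + C (1:ℤ) * X^0 := by
    rw [map_one, pow_zero, mul_one]
  rw [h, reflect_add, reflect_C_mul_X_pow, reflect_C_mul_X_pow,
    revAt_le (le_refl 2), revAt_le (by omega : 0 ≤ 2), Nat.sub_self, Nat.sub_zero]
  rw [pow_zero, mul_one, map_one, one_mul]
  ring

lemma E2_irred (q : ℕ) (hq : q.Prime) :
    Irreducible (X^2 + C (q:ℤ)) := by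
  have h2 : (2:ℤ) ≤ q := by exact_mod_cast hq.two_le
  have hmo : (X^2 + C (q:ℤ)).Monic :=
    monic_X_pow_add (lt_of_le_of_lt degree_C_le (by norm_num))
  have hdeg : (X^2 + C (q:ℤ)).natDegree = 2 := by compute_degree!
  apply eisenstein_irreducible q hq _ hmo
  · rw [hdeg]; omega
  · intro i hi
    rw [hdeg] at hi
    rw [coeff_add, coeff_X_pow, if_neg (by omega), coeff_C]
    split_ifs <;> simp
  · rw [coeff_add, coeff_X_pow, if_neg (by omega), coeff_C, if_pos rfl, zero_add]
    intro h
    have := Int.le_of_dvd (by positivity) h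
    nlinarith

lemma fam2_irred (q : ℕ) (hq : q.Prime) :
    Irreducible (C (q:ℤ) * X^2 + 1) := by
  apply irreducible_of_irreducible_reverse
  · rw [fam2_coeff q, if_neg (by omega), if_pos rfl]; norm_num
  · rw [fam2_deg q hq.ne_zero]; omega
  · rw [fam2_rev q hq.ne_zero]
    exact E2_irred q hq

lemma fam2_not (q : ℕ) (hq : q.Prime) (hq4 : q % 4 = 3) (s : ℤ) :
    ¬ IsEisenstein ((C (q:ℤ) * X^2 + 1).comp (X + C s)) := by
  rintro ⟨p, hp, hco, h0, hlead⟩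
  set f : Polynomial ℤ := C (q:ℤ) * X^2 + 1 with hf
  have hdf : f.natDegree = 2 := fam2_deg q hq.ne_zero
  have hcomp : f.comp (X + C s) = C (q:ℤ) * (X + C s)^2 + 1 := by simp [hf]
  have hdg : (f.comp (X + C s)).natDegree = 2 := by
    rw [natDegree_comp, hdf, natDegree_X_add_C, mul_one]
  have hgl : (f.comp (X + C s)).leadingCoeff = (q:ℤ) := by
    rw [leadingCoeff_comp (by rw [natDegree_X_add_C]; omega), leadingCoeff_X_add_C, one_pow,
      mul_one, leadingCoeff, hdf, fam2_coeff q, if_pos rfl, if_neg (by omega)]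
    ring
  have c1 : (f.comp (X + C s)).coeff 1 = (q:ℤ) * (s * 2) := by
    rw [hcomp, coeff_add, coeff_C_mul, coeff_X_add_C_pow,
      coeff_one, if_neg one_ne_zero]
    norm_num
  have c0 : (f.comp (X + C s)).coeff 0 = (q:ℤ) * s^2 + 1 := by
    rw [hcomp, coeff_add, coeff_C_mul, coeff_X_add_C_pow, coeff_one, if_pos rfl]
    norm_num
  have hpZ : Prime ((p:ℕ) : ℤ) := Nat.prime_iff_prime_int.mp hp
  have hnq : ¬ ((p:ℤ) ∣ (q:ℤ)) := by rwa [hgl] at hlead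
  have d1 := hco 1 (by rw [hdg]; omega)
  have d0 := hco 0 (by rw [hdg]; omega)
  rw [c1] at d1
  rw [c0] at d0
  rw [c0] at h0
  by_cases hp2 : p = 2
  · -- p = 2
    subst hp2
    rcases Int.even_or_odd s with ⟨k, hk⟩ | ⟨k, hk⟩
    · have hx : (q:ℤ) * s^2 + 1 = 4*((q:ℤ)*k^2) + 1 := by rw [hk]; ring
      rw [hx] at d0
      norm_num at d0
      omega
    · obtain ⟨u, hu⟩ : ∃ u : ℤ, (q:ℤ) = 4*u+3 := ⟨(q/4 : ℕ), by omega⟩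
      have hx : (q:ℤ) * s^2 + 1 = 4*((4*u+3)*(k^2+k) + u + 1) := by rw [hk, hu]; ring
      apply h0
      rw [hx]
      norm_num
  · -- p odd
    have d1' : (p:ℤ) ∣ s * 2 := (hpZ.dvd_mul.mp d1).resolve_left hnq
    have hs : (p:ℤ) ∣ s := by
      rcases hpZ.dvd_mul.mp d1' with h | h
      · exact h
      · exfalso
        have : (p:ℕ) ∣ 2 := by exact_mod_cast h
        exact hp2 ((Nat.prime_dvd_prime_iff_eq hp Nat.prime_two).mp this)
    have : (p:ℤ) ∣ 1 := by
      have hqs : (p:ℤ) ∣ (q:ℤ) * s^2 := dvd_mul_of_dvd_right (dvd_pow hs (by omega)) _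
      exact (dvd_add_right hqs).mp d0
    exact hpZ.not_dvd_one this

/-- For every `n ≥ 2`, the set of irreducible polynomials of degree `n` over `ℤ` that are not
shifted Eisenstein polynomials is infinite. -/
theorem irreducible_not_shifted_eisenstein_infinite (n : ℕ) (hn : 2 ≤ n) :
    {f : Polynomial ℤ | f.natDegree = n ∧ Irreducible f ∧
      ¬ ∃ s : ℤ, IsEisenstein (f.comp (X + C s))}.Infinite := by
  rcases eq_or_lt_of_le hn with h2 | h3
  · -- n = 2
    subst h2
    have hS : {q : ℕ | q.Prime ∧ (q : ZMod 4) = 3}.Infinite :=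
      Nat.infinite_setOfPred_prime_and_eq_mod (by decide)
    have himg : (fun q : ℕ => C (q:ℤ) * X^2 + 1) '' {q : ℕ | q.Prime ∧ (q : ZMod 4) = 3}
        ⊆ {f : Polynomial ℤ | f.natDegree = 2 ∧ Irreducible f ∧
          ¬ ∃ s : ℤ, IsEisenstein (f.comp (X + C s))} := by
      rintro _ ⟨q, ⟨hq, hq4⟩, rfl⟩
      have hq4' : q % 4 = 3 := by
        have hv := ZMod.val_natCast (n := 4) q
        rw [hq4] at hv
        exact hv.symm
      refine ⟨fam2_deg q hq.ne_zero, fam2_irred q hq, ?_⟩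
      rintro ⟨s, hs⟩
      exact fam2_not q hq hq4' s hs
    apply Set.Infinite.mono himg
    apply Set.Infinite.image ?_ hS
    intro a ha b hb hab
    have h2 := congrArg (fun f : Polynomial ℤ => f.coeff 2) hab
    simp only [fam2_coeff, if_pos rfl, if_neg (by omega : ¬ (2:ℕ) = 0), add_zero] at h2
    exact_mod_cast h2
  · -- n ≥ 3
    have h3' : 3 ≤ n := h3
    have hS : {q : ℕ | q.Prime}.Infinite := Nat.infinite_setOf_prime
    have himg : (fun q : ℕ => C (q:ℤ) * X^n + (C (q:ℤ) * X + 1)) '' {q : ℕ | q.Prime}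
        ⊆ {f : Polynomial ℤ | f.natDegree = n ∧ Irreducible f ∧
          ¬ ∃ s : ℤ, IsEisenstein (f.comp (X + C s))} := by
      rintro _ ⟨q, hq, rfl⟩
      refine ⟨fam1_deg q n hq.ne_zero h3', fam1_irred q n hq h3', ?_⟩
      rintro ⟨s, hs⟩
      exact fam1_not q n hq h3' s hs
    apply Set.Infinite.mono himg
    apply Set.Infinite.image ?_ hS
    intro a ha b hb hab
    have h2 := congrArg (fun f : Polynomial ℤ => f.coeff n) hab
    simp only [fam1_coeff _ _ h3', if_pos rfl, if_neg (by omega : ¬ n = 1),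
      if_neg (by omega : ¬ n = 0), add_zero] at h2
    exact_mod_cast h2
end

section
/- For every integer n > 2, limsup_{H→∞} #C̄_n(H) / (2H(2H+1)^n) ≤ 2 sinh(∑_p 1/p²) < 1, where the sum runs over all primes p; in particular limsup_{H→∞} #C̄_n(H) / (2H(2H+1)^n) < 1. -/
open Polynomial Filter
open Topology

/-- Height of an integer polynomial: the maximum of the absolute values of its coefficients. -/
def polyHeight (f : Polynomial ℤ) : ℕ :=
  (Finset.range (f.natDegree + 1)).sup fun i => (f.coeff i).natAbs

/-- `C̄_n(H)`: polynomials `f` of degree exactly `n` and height at most `H` such that `f(x+s)`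
is Eisenstein and also of height at most `H`, for some integer `s`. -/
def CbarSet (n H : ℕ) : Set (Polynomial ℤ) :=
  {f | f.natDegree = n ∧ polyHeight f ≤ H ∧
    ∃ s : ℤ, IsEisenstein (f.comp (X + C s)) ∧ polyHeight (f.comp (X + C s)) ≤ H}

lemma coeff_natAbs_le {f : Polynomial ℤ} {H : ℕ} (hH : polyHeight f ≤ H) (i : ℕ) :
    (f.coeff i).natAbs ≤ H := by
  rcases le_or_gt i f.natDegree with h | h
  · exact le_trans (Finset.le_sup (f := fun i => (f.coeff i).natAbs)
      (Finset.mem_range.mpr (by omega))) hH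
  · rw [f.coeff_eq_zero_of_natDegree_lt h]; simp

lemma taylor_coeff_of_high_zero (d : Polynomial ℤ) (r : ℤ) (i : ℕ)
    (h : ∀ j, i < j → d.coeff j = 0) : (taylor r d).coeff i = d.coeff i := by
  rw [taylor_coeff]
  have hq : hasseDeriv i d = C (d.coeff i) := by
    ext m
    rw [hasseDeriv_coeff, coeff_C]
    cases m with
    | zero => simp
    | succ m => simp [h (m + 1 + i) (by omega)]
  rw [hq, eval_C]

lemma taylor_coeff_eq_add_mul (g : Polynomial ℤ) (c : ℤ) (i : ℕ) :
    ∃ k : ℤ, (taylor c g).coeff i = g.coeff i + c * k := by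
  rw [taylor_coeff]
  set q := hasseDeriv i g with hq
  refine ⟨∑ m ∈ Finset.range q.natDegree, q.coeff (m + 1) * c ^ m, ?_⟩
  have h0 : q.coeff 0 = g.coeff i := by simp [hq, hasseDeriv_coeff]
  rw [eval_eq_sum_range, Finset.sum_range_succ', h0, Finset.mul_sum]
  rw [add_comm]
  congr 1
  · simp
  · exact Finset.sum_congr rfl fun m _ => by ring

lemma taylor_coeff_zero_eq (g : Polynomial ℤ) (c : ℤ) :
    ∃ k : ℤ, (taylor c g).coeff 0 = g.coeff 0 + g.coeff 1 * c + c ^ 2 * k := by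
  rw [taylor_coeff_zero]
  refine ⟨∑ m ∈ Finset.range g.natDegree, g.coeff (m + 2) * c ^ m, ?_⟩
  have : eval c g = ∑ i ∈ Finset.range (g.natDegree + 2), g.coeff i * c ^ i :=
    eval_eq_sum_range' (by omega) c
  have hsum : ∑ m ∈ Finset.range g.natDegree, g.coeff (m + 1 + 1) * c ^ (m + 1 + 1) =
      c ^ 2 * ∑ m ∈ Finset.range g.natDegree, g.coeff (m + 2) * c ^ m := by
    rw [Finset.mul_sum]
    exact Finset.sum_congr rfl fun m _ => by ring_nf
  rw [this, Finset.sum_range_succ', Finset.sum_range_succ', hsum]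
  ring

lemma isEisensteinWith_taylor_mul {g : Polynomial ℤ} {p : ℕ} (t : ℤ)
    (hd : 2 ≤ g.natDegree) (hE : IsEisensteinWith g p) :
    IsEisensteinWith (taylor ((p : ℤ) * t) g) p := by
  obtain ⟨h1, h2, h3⟩ := hE
  set c : ℤ := (p : ℤ) * t with hc
  have hdeg : (taylor c g).natDegree = g.natDegree := natDegree_taylor g c
  refine ⟨?_, ?_, ?_⟩
  · intro i hi
    rw [hdeg] at hi
    obtain ⟨k, hk⟩ := taylor_coeff_eq_add_mul g c i
    rw [hk]
    exact dvd_add (h1 i hi) ⟨t * k, by rw [hc]; ring⟩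
  · obtain ⟨k, hk⟩ := taylor_coeff_zero_eq g c
    rw [hk]
    intro hdvd
    apply h2
    obtain ⟨a, ha⟩ := h1 1 (by omega)
    have d1 : (p : ℤ) ^ 2 ∣ g.coeff 1 * c := ⟨a * t, by rw [ha, hc]; ring⟩
    have d2 : (p : ℤ) ^ 2 ∣ c ^ 2 * k := ⟨t ^ 2 * k, by rw [hc]; ring⟩
    have := (hdvd.sub d2).sub d1
    simpa using this
  · rw [leadingCoeff, hdeg, taylor_coeff_of_high_zero _ _ _
      (fun j hj => g.coeff_eq_zero_of_natDegree_lt hj)]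
    exact h3

lemma cover {n H : ℕ} (hn : 2 ≤ n) {f : Polynomial ℤ} (hf : f ∈ CbarSet n H) :
    ∃ p r : ℕ, p.Prime ∧ 2 ≤ p ∧ p ≤ H ∧ r < p ∧
      IsEisensteinWith (taylor ((r : ℕ) : ℤ) f) p := by
  obtain ⟨hdeg, hH, s, ⟨p, hp, hE⟩, hHs⟩ := hf
  rw [← taylor_apply] at hE hHs
  set g := taylor s f with hg
  have hgdeg : g.natDegree = n := by rw [hg, natDegree_taylor, hdeg]
  have hppos : (0 : ℤ) < (p : ℤ) := by exact_mod_cast hp.pos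
  have h0 : (p : ℤ) ∣ g.coeff 0 := hE.1 0 (by omega)
  have h0ne : g.coeff 0 ≠ 0 := by
    intro h
    exact hE.2.1 (by rw [h]; exact dvd_zero _)
  have hpH : p ≤ H := by
    have hd : p ∣ (g.coeff 0).natAbs := by
      rwa [Int.natCast_dvd] at h0
    exact (Nat.le_of_dvd (Int.natAbs_pos.mpr h0ne) hd).trans (coeff_natAbs_le hHs 0)
  set r : ℤ := s % (p : ℤ) with hr
  have hr0 : 0 ≤ r := Int.emod_nonneg s (by positivity)
  have hrlt : r < (p : ℤ) := Int.emod_lt_of_pos s hppos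
  have key : taylor r f = taylor ((p : ℤ) * (-(s / (p : ℤ)))) g := by
    rw [hg, taylor_taylor]
    congr 1
    rw [hr, Int.emod_def]
    ring
  have hEr : IsEisensteinWith (taylor r f) p := by
    rw [key]
    exact isEisensteinWith_taylor_mul _ (by omega) hE
  refine ⟨p, r.toNat, hp, hp.two_le, hpH, ?_, ?_⟩
  · omega
  · rwa [Int.toNat_of_nonneg hr0]

def ASet (n H p r : ℕ) : Set (Polynomial ℤ) :=
  {f | f.natDegree = n ∧ polyHeight f ≤ H ∧ IsEisensteinWith (taylor ((r : ℕ) : ℤ) f) p}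

lemma natAbs_le_iff {x : ℤ} {H : ℕ} : x.natAbs ≤ H ↔ -(H : ℤ) ≤ x ∧ x ≤ (H : ℤ) := by
  omega

lemma card_ASet_le (n H p r : ℕ) (hp : 1 ≤ p) :
    Nat.card (ASet n H p r) ≤ (2 * H + 1) * (2 * (H / p) + 2) ^ n := by
  classical
  set q : ℤ := (H : ℤ) / (p : ℤ) with hq
  have hppos : (0 : ℤ) < (p : ℤ) := by exact_mod_cast hp
  -- membership facts
  have hmem : ∀ f ∈ ASet n H p r, ∀ i : ℕ, f.coeff i / (p : ℤ) ∈ Finset.Icc (-q - 1) q := by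
    intro f hf i
    obtain ⟨hd, hH, _⟩ := hf
    have h1 := (natAbs_le_iff.mp (coeff_natAbs_le hH i))
    rw [Finset.mem_Icc]
    constructor
    · have h2 : (-q - 1) * (p : ℤ) ≤ -(H : ℤ) := by
        have h3 : (H : ℤ) < (q + 1) * (p : ℤ) := Int.lt_ediv_add_one_mul_self _ hppos
        nlinarith
      rw [Int.le_ediv_iff_mul_le hppos]
      exact h2.trans h1.1
    · exact Int.ediv_le_ediv hppos h1.2
  have hmemn : ∀ f ∈ ASet n H p r, f.coeff n ∈ Finset.Icc (-(H : ℤ)) (H : ℤ) := by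
    intro f hf
    obtain ⟨hd, hH, _⟩ := hf
    have h1 := (natAbs_le_iff.mp (coeff_natAbs_le hH n))
    rw [Finset.mem_Icc]
    exact h1
  -- the injection
  set T := (Finset.Icc (-(H : ℤ)) (H : ℤ) : Finset ℤ) ×
    (Fin n → (Finset.Icc (-q - 1) q : Finset ℤ)) with hT
  have : ∀ f : ASet n H p r, f.1.coeff n ∈ Finset.Icc (-(H : ℤ)) (H : ℤ) :=
    fun f => hmemn f.1 f.2
  let Φ : ASet n H p r → Finset.Icc (-(H : ℤ)) (H : ℤ) ×
      (Fin n → Finset.Icc (-q - 1) q) :=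
    fun f => (⟨f.1.coeff n, hmemn f.1 f.2⟩,
      fun i => ⟨f.1.coeff i / (p : ℤ), hmem f.1 f.2 i⟩)
  have hΦ : Function.Injective Φ := by
    intro f g hfg
    have hcn : f.1.coeff n = g.1.coeff n := congrArg (fun x => (x.1 : ℤ)) hfg
    have hcd : ∀ i : Fin n, f.1.coeff i / (p : ℤ) = g.1.coeff i / (p : ℤ) := by
      intro i
      have := congrArg (fun x => ((x.2 i : ℤ))) hfg
      exact this
    obtain ⟨hfd, hfH, hfE⟩ := f.2
    obtain ⟨hgd, hgH, hgE⟩ := g.2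
    have key : ∀ k : ℕ, ∀ j : ℕ, n ≤ j + k → f.1.coeff j = g.1.coeff j := by
      intro k
      induction k with
      | zero =>
        intro j hj
        rcases eq_or_lt_of_le (by omega : n ≤ j) with h | h
        · rw [← h]; exact hcn
        · rw [f.1.coeff_eq_zero_of_natDegree_lt (by omega),
            g.1.coeff_eq_zero_of_natDegree_lt (by omega)]
      | succ k ih =>
        intro j hj
        by_cases h : n ≤ j + k
        · exact ih j h
        have hjn : j < n := by omega
        -- coefficients above j agree
        have habove : ∀ j', j < j' → (f.1 - g.1).coeff j' = 0 := by
          intro j' hj'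
          rw [coeff_sub, ih j' (by omega), sub_self]
        have hdvd : (p : ℤ) ∣ f.1.coeff j - g.1.coeff j := by
          have h1 := hfE.1 j (by rw [natDegree_taylor, hfd]; omega)
          have h2 := hgE.1 j (by rw [natDegree_taylor, hgd]; omega)
          have h3 : (taylor ((r : ℕ) : ℤ) (f.1 - g.1)).coeff j = (f.1 - g.1).coeff j :=
            taylor_coeff_of_high_zero _ _ _ habove
          rw [map_sub, coeff_sub] at h3
          rw [coeff_sub] at h3
          rw [← h3]
          exact dvd_sub h1 h2
        have hmodeq : f.1.coeff j % (p : ℤ) = g.1.coeff j % (p : ℤ) :=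
          Int.ModEq.symm (Int.modEq_iff_dvd.mpr hdvd)
        have e1 := Int.mul_ediv_add_emod (f.1.coeff j) (p : ℤ)
        have e2 := Int.mul_ediv_add_emod (g.1.coeff j) (p : ℤ)
        have hdd : f.1.coeff j / (p : ℤ) = g.1.coeff j / (p : ℤ) := hcd ⟨j, hjn⟩
        have e3 : (p : ℤ) * (f.1.coeff j / (p : ℤ)) = (p : ℤ) * (g.1.coeff j / (p : ℤ)) := by
          rw [hdd]
        omega
    refine Subtype.ext (Polynomial.ext fun j => key n j (by omega))
  have hcard := Nat.card_le_card_of_injective Φ hΦ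
  calc Nat.card (ASet n H p r)
      ≤ Nat.card (Finset.Icc (-(H : ℤ)) (H : ℤ) × (Fin n → Finset.Icc (-q - 1) q)) := hcard
    _ = (2 * H + 1) * (2 * (H / p) + 2) ^ n := by
        rw [Nat.card_prod, Nat.card_fun, Nat.card_eq_finsetCard, Nat.card_eq_finsetCard,
          Nat.card_eq_fintype_card, Fintype.card_fin, Int.card_Icc, Int.card_Icc]
        congr 1
        · omega
        · congr 1
          have : q = ((H / p : ℕ) : ℤ) := by
            rw [hq, Int.natCast_div]
          omega

lemma ASet_finite (n H p r : ℕ) : (ASet n H p r).Finite := by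
  classical
  rw [← Set.finite_coe_iff]
  let Ψ : ASet n H p r → (Fin (n + 1) → Finset.Icc (-(H : ℤ)) (H : ℤ)) := fun f i =>
    ⟨f.1.coeff i, by
      rw [Finset.mem_Icc]
      exact natAbs_le_iff.mp (coeff_natAbs_le f.2.2.1 i)⟩
  have hΨ : Function.Injective Ψ := by
    intro f g hfg
    refine Subtype.ext (Polynomial.ext fun j => ?_)
    rcases le_or_gt j n with h | h
    · exact congrArg (fun x => (x ⟨j, by omega⟩ : ℤ)) hfg
    · rw [f.1.coeff_eq_zero_of_natDegree_lt (by rw [f.2.1]; omega),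
        g.1.coeff_eq_zero_of_natDegree_lt (by rw [g.2.1]; omega)]
  exact Finite.of_injective Ψ hΨ

lemma card_CbarSet_le (n H : ℕ) (hn : 2 ≤ n) :
    Nat.card (CbarSet n H) ≤
      ∑ p ∈ Finset.Icc 2 H, p * ((2 * H + 1) * (2 * (H / p) + 2) ^ n) := by
  classical
  set B : Finset (Polynomial ℤ) := (Finset.Icc 2 H).biUnion
    (fun p => (Finset.range p).biUnion (fun r => (ASet_finite n H p r).toFinset)) with hB
  have hsub : CbarSet n H ⊆ ↑B := by
    intro f hf
    obtain ⟨p, r, hp, h2, hH, hr, hE⟩ := cover hn hf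
    rw [Finset.mem_coe, hB, Finset.mem_biUnion]
    refine ⟨p, Finset.mem_Icc.mpr ⟨h2, hH⟩, Finset.mem_biUnion.mpr
      ⟨r, Finset.mem_range.mpr hr, (Set.Finite.mem_toFinset _).mpr ⟨hf.1, hf.2.1, hE⟩⟩⟩
  calc Nat.card (CbarSet n H) = (CbarSet n H).ncard := Nat.card_coe_set_eq _
    _ ≤ (↑B : Set (Polynomial ℤ)).ncard := Set.ncard_le_ncard hsub B.finite_toSet
    _ = B.card := Set.ncard_coe_finset B
    _ ≤ ∑ p ∈ Finset.Icc 2 H, ((Finset.range p).biUnion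
        (fun r => (ASet_finite n H p r).toFinset)).card := Finset.card_biUnion_le
    _ ≤ ∑ p ∈ Finset.Icc 2 H, p * ((2 * H + 1) * (2 * (H / p) + 2) ^ n) := by
        refine Finset.sum_le_sum fun p hp => ?_
        have hp1 : 1 ≤ p := by
          have := (Finset.mem_Icc.mp hp).1; omega
        calc ((Finset.range p).biUnion (fun r => (ASet_finite n H p r).toFinset)).card
            ≤ ∑ r ∈ Finset.range p, ((ASet_finite n H p r).toFinset).card :=
              Finset.card_biUnion_le
          _ ≤ ∑ r ∈ Finset.range p, (2 * H + 1) * (2 * (H / p) + 2) ^ n := by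
              refine Finset.sum_le_sum fun r _ => ?_
              rw [← Nat.card_eq_card_finite_toFinset]
              exact card_ASet_le n H p r hp1
          _ = p * ((2 * H + 1) * (2 * (H / p) + 2) ^ n) := by
              rw [Finset.sum_const, Finset.card_range, smul_eq_mul]

noncomputable def Ffun (n H m : ℕ) : ℝ :=
  if 2 ≤ m ∧ m ≤ H then
    (m : ℝ) * ((2 * H + 2 * m) / ((m : ℝ) * (2 * H + 1))) ^ n * ((2 * H + 1) / (2 * H))
  else 0

noncomputable def Gfun (n m : ℕ) : ℝ := if 2 ≤ m then (m : ℝ) * ((1 : ℝ) / m) ^ n else 0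

noncomputable def Bfun (n m : ℕ) : ℝ :=
  if 2 ≤ m then 3 * 2 ^ (n - 1) * ((1 : ℝ) / m) ^ 2 else 0

lemma Bfun_summable (n : ℕ) : Summable (Bfun n) := by
  have h1 : Summable (fun m : ℕ => 3 * (2:ℝ) ^ (n-1) * (1 / (m:ℝ)) ^ 2) := by
    apply Summable.mul_left
    have := (Real.summable_one_div_nat_pow (p := 2)).mpr (by norm_num)
    simpa [div_pow] using this
  apply Summable.of_nonneg_of_le _ _ h1
  · intro m
    unfold Bfun
    split <;> positivity
  · intro m
    unfold Bfun
    split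
    · exact le_refl _
    · positivity

lemma Ffun_nonneg (n H m : ℕ) : 0 ≤ Ffun n H m := by
  unfold Ffun
  split <;> positivity

lemma Ffun_le_Bfun {n : ℕ} (hn : 3 ≤ n) (H m : ℕ) : ‖Ffun n H m‖ ≤ Bfun n m := by
  rw [Real.norm_of_nonneg (Ffun_nonneg n H m)]
  unfold Ffun Bfun
  split
  · next h =>
    obtain ⟨h2, hH⟩ := h
    rw [if_pos h2]
    set M := (m : ℝ) with hM
    set K := (H : ℝ) with hK
    have hM2 : (2 : ℝ) ≤ M := by rw [hM]; exact_mod_cast h2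
    have hK1 : (2 : ℝ) ≤ K := by
      have h' : 2 ≤ H := le_trans h2 hH
      rw [hK]; exact_mod_cast h'
    have hMK : M ≤ K := by
      rw [hM, hK]; exact_mod_cast hH
    have h1 : (2 * K + 2 * M) / (M * (2 * K + 1)) ≤ 2 / M := by
      rw [div_le_div_iff₀ (by nlinarith) (by nlinarith)]
      nlinarith
    have h2' : ((2 * K + 2 * M) / (M * (2 * K + 1))) ^ n ≤ (2 / M) ^ n :=
      pow_le_pow_left₀ (by positivity) h1 n
    have h3 : (2 * K + 1) / (2 * K) ≤ 3 / 2 := by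
      rw [div_le_div_iff₀ (by nlinarith) (by norm_num)]
      nlinarith
    calc M * ((2 * K + 2 * M) / (M * (2 * K + 1))) ^ n * ((2 * K + 1) / (2 * K))
        ≤ M * (2 / M) ^ n * (3 / 2) := by
          apply mul_le_mul _ h3 (by positivity) (by positivity)
          exact mul_le_mul_of_nonneg_left h2' (by positivity)
      _ ≤ 3 * 2 ^ (n - 1) * (1 / M) ^ 2 := by
          have hpow : M ^ 3 ≤ M ^ n := pow_le_pow_right₀ (by linarith) hn
          have hM0 : M ≠ 0 := by positivity
          have hMn : M ^ n ≠ 0 := by positivity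
          have h2n : (2:ℝ) ^ n = 2 * 2 ^ (n - 1) := by
            rw [← pow_succ']
            congr 1
            omega
          have e : M * (2 ^ n / M ^ n) * (3 / 2) =
              (3 * 2 ^ (n - 1) * (1 ^ 2 / M ^ 2)) * (M ^ 3 / M ^ n) := by
            rw [h2n]
            field_simp
          rw [div_pow, e]
          have hr : M ^ 3 / M ^ n ≤ 1 := (div_le_one (by positivity)).mpr hpow
          calc (3 * 2 ^ (n - 1) * (1 ^ 2 / M ^ 2)) * (M ^ 3 / M ^ n)
              ≤ (3 * 2 ^ (n - 1) * (1 ^ 2 / M ^ 2)) * 1 :=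
                mul_le_mul_of_nonneg_left hr (by positivity)
            _ = 3 * 2 ^ (n - 1) * (1 ^ 2 / M ^ 2) := mul_one _
            _ = 3 * 2 ^ (n - 1) * (1 / M) ^ 2 := by rw [div_pow]
  · next h =>
    rcases le_or_gt 2 m with h2 | h2
    · rw [if_pos h2]; positivity
    · rw [if_neg (by omega)]

lemma Ffun_summable {n : ℕ} (hn : 3 ≤ n) (H : ℕ) : Summable (fun m => Ffun n H m) :=
  Summable.of_norm_bounded (Bfun_summable n) (Ffun_le_Bfun hn H)

lemma ratio_le {n : ℕ} (hn : 2 < n) {H : ℕ} (hH : 1 ≤ H) :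
    (Nat.card (CbarSet n H) : ℝ) / (2 * (H : ℝ) * (2 * (H : ℝ) + 1) ^ n) ≤
      ∑' m, Ffun n H m := by
  have hH' : (1 : ℝ) ≤ (H : ℝ) := by exact_mod_cast hH
  have hD : (0 : ℝ) < 2 * (H : ℝ) * (2 * (H : ℝ) + 1) ^ n := by positivity
  have hcard := card_CbarSet_le n H (by omega)
  have hcast : (Nat.card (CbarSet n H) : ℝ) ≤
      ∑ p ∈ Finset.Icc 2 H, (p : ℝ) * ((2 * (H : ℝ) + 1) * (2 * ((H / p : ℕ) : ℝ) + 2) ^ n) := by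
    calc (Nat.card (CbarSet n H) : ℝ)
        ≤ ((∑ p ∈ Finset.Icc 2 H, p * ((2 * H + 1) * (2 * (H / p) + 2) ^ n) : ℕ) : ℝ) := by
          exact_mod_cast hcard
      _ = ∑ p ∈ Finset.Icc 2 H, (p : ℝ) * ((2 * (H : ℝ) + 1) * (2 * ((H / p : ℕ) : ℝ) + 2) ^ n) := by
          push_cast
          rfl
  calc (Nat.card (CbarSet n H) : ℝ) / (2 * (H : ℝ) * (2 * (H : ℝ) + 1) ^ n)
      ≤ (∑ p ∈ Finset.Icc 2 H, (p : ℝ) * ((2 * (H : ℝ) + 1) * (2 * ((H / p : ℕ) : ℝ) + 2) ^ n)) /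
        (2 * (H : ℝ) * (2 * (H : ℝ) + 1) ^ n) := by
        exact div_le_div_of_nonneg_right hcast hD.le
    _ = ∑ p ∈ Finset.Icc 2 H, (p : ℝ) * ((2 * (H : ℝ) + 1) * (2 * ((H / p : ℕ) : ℝ) + 2) ^ n) /
        (2 * (H : ℝ) * (2 * (H : ℝ) + 1) ^ n) := Finset.sum_div _ _ _
    _ ≤ ∑ p ∈ Finset.Icc 2 H, Ffun n H p := by
        refine Finset.sum_le_sum fun p hp => ?_
        obtain ⟨hp2, hpH⟩ := Finset.mem_Icc.mp hp
        set P := (p : ℝ) with hPd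
        set K := (H : ℝ) with hKd
        set d := ((H / p : ℕ) : ℝ) with hdd
        have hP2 : (2 : ℝ) ≤ P := by rw [hPd]; exact_mod_cast hp2
        have hd : d ≤ K / P := by
          rw [hdd, hKd, hPd]; exact Nat.cast_div_le
        have hP0 : P ≠ 0 := by positivity
        have hd0 : (0 : ℝ) ≤ d := by rw [hdd]; positivity
        have e : (2 * K + 2 * P) / P = 2 * (K / P) + 2 := by
          field_simp
        have h1 : 2 * d + 2 ≤ (2 * K + 2 * P) / P := by
          rw [e]; linarith
        have hpow : (2 * d + 2) ^ n ≤ ((2 * K + 2 * P) / P) ^ n :=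
          pow_le_pow_left₀ (by positivity) h1 n
        have hcond : 2 ≤ p ∧ p ≤ H := ⟨hp2, hpH⟩
        rw [Ffun, if_pos hcond]
        have e1 : P * ((2 * K + 1) * (2 * d + 2) ^ n) / (2 * K * (2 * K + 1) ^ n) =
            (2 * d + 2) ^ n * (P * (2 * K + 1) / (2 * K * (2 * K + 1) ^ n)) := by
          ring
        have e2 : P * ((2 * K + 2 * P) / (P * (2 * K + 1))) ^ n * ((2 * K + 1) / (2 * K)) =
            ((2 * K + 2 * P) / P) ^ n * (P * (2 * K + 1) / (2 * K * (2 * K + 1) ^ n)) := by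
          rw [show P * (2 * K + 1) = P * (2 * K + 1) from rfl, ← div_div, div_pow]
          ring
        rw [e1, e2]
        exact mul_le_mul_of_nonneg_right hpow (by positivity)
    _ ≤ ∑' m, Ffun n H m :=
        Summable.sum_le_tsum _ (fun m _ => Ffun_nonneg n H m) (Ffun_summable (by omega) H)

lemma Ffun_tendsto (n m : ℕ) :
    Tendsto (fun H => Ffun n H m) atTop (𝓝 (Gfun n m)) := by
  rcases lt_or_ge m 2 with h2 | h2
  · have : ∀ H, Ffun n H m = 0 := fun H => by
      rw [Ffun, if_neg (by omega)]
    rw [Gfun, if_neg (by omega)]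
    simpa [this] using tendsto_const_nhds
  · set M := (m : ℝ) with hM
    have hM2 : (2 : ℝ) ≤ M := by rw [hM]; exact_mod_cast h2
    have hM0 : M ≠ 0 := by positivity
    have htop : Tendsto (fun H : ℕ => 2 * (H : ℝ) + 1) atTop atTop :=
      tendsto_atTop_add_const_right _ 1
        (tendsto_natCast_atTop_atTop.const_mul_atTop two_pos)
    have h2top : Tendsto (fun H : ℕ => 2 * (H : ℝ)) atTop atTop :=
      tendsto_natCast_atTop_atTop.const_mul_atTop two_pos
    have hinv : Tendsto (fun H : ℕ => (2 * (H : ℝ) + 1)⁻¹) atTop (𝓝 0) :=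
      htop.inv_tendsto_atTop
    have hinv2 : Tendsto (fun H : ℕ => (2 * (H : ℝ))⁻¹) atTop (𝓝 0) :=
      h2top.inv_tendsto_atTop
    have hfrac1 : Tendsto (fun H : ℕ => (2 * (H : ℝ) + 2 * M) / (M * (2 * (H : ℝ) + 1)))
        atTop (𝓝 (1 / M)) := by
      have heq : ∀ H : ℕ, (2 * (H : ℝ) + 2 * M) / (M * (2 * (H : ℝ) + 1)) =
          (1 / M) * (1 + (2 * M - 1) * (2 * (H : ℝ) + 1)⁻¹) := by
        intro H
        have hne : (2 * (H : ℝ) + 1) ≠ 0 := by positivity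
        field_simp
        try ring
      simp only [heq]
      have := ((hinv.const_mul (2 * M - 1)).const_add 1).const_mul (1 / M)
      simpa using this
    have hfrac2 : Tendsto (fun H : ℕ => (2 * (H : ℝ) + 1) / (2 * (H : ℝ)))
        atTop (𝓝 1) := by
      have heq : ∀ᶠ H : ℕ in atTop, (1 : ℝ) + (2 * (H : ℝ))⁻¹ =
          (2 * (H : ℝ) + 1) / (2 * (H : ℝ)) := by
        filter_upwards [eventually_ge_atTop 1] with H hH
        have hH' : (1 : ℝ) ≤ (H : ℝ) := by exact_mod_cast hH
        have hne : (2 * (H : ℝ)) ≠ 0 := by positivity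
        field_simp
      refine Tendsto.congr' heq ?_
      have := hinv2.const_add (1 : ℝ)
      simpa using this
    have hmain : Tendsto (fun H : ℕ =>
        M * ((2 * (H : ℝ) + 2 * M) / (M * (2 * (H : ℝ) + 1))) ^ n *
          ((2 * (H : ℝ) + 1) / (2 * (H : ℝ)))) atTop (𝓝 (M * (1 / M) ^ n)) := by
      have := ((hfrac1.pow n).const_mul M).mul hfrac2
      simpa using this
    rw [Gfun, if_pos h2]
    refine Tendsto.congr' ?_ hmain
    filter_upwards [eventually_ge_atTop m] with H hH
    rw [Ffun, if_pos ⟨h2, hH⟩]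

lemma tsum_Ffun_tendsto {n : ℕ} (hn : 3 ≤ n) :
    Tendsto (fun H => ∑' m, Ffun n H m) atTop (𝓝 (∑' m, Gfun n m)) :=
  tendsto_tsum_of_dominated_convergence (Bfun_summable n) (Ffun_tendsto n)
    (Eventually.of_forall fun H m => Ffun_le_Bfun hn H m)

lemma Gfun_summable {n : ℕ} (hn : 3 ≤ n) : Summable (Gfun n) := by
  apply Summable.of_norm_bounded (Bfun_summable n)
  intro m
  rw [Gfun, Bfun]
  split
  · next h =>
    have hM2 : (2 : ℝ) ≤ (m : ℝ) := by exact_mod_cast h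
    rw [Real.norm_of_nonneg (by positivity)]
    have h1 : ((1 : ℝ) / m) ^ n ≤ ((1 : ℝ) / m) ^ 3 :=
      pow_le_pow_of_le_one (by positivity) (by rw [div_le_one (by linarith)]; linarith) hn
    have h2 : (m : ℝ) * ((1 : ℝ) / m) ^ 3 = ((1 : ℝ) / m) ^ 2 * ((m : ℝ) * (1 / m)) := by ring
    have h3 : (m : ℝ) * (1 / (m : ℝ)) = 1 := by
      field_simp
    calc (m : ℝ) * ((1 : ℝ) / m) ^ n ≤ (m : ℝ) * ((1 : ℝ) / m) ^ 3 :=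
          mul_le_mul_of_nonneg_left h1 (by positivity)
      _ = ((1 : ℝ) / m) ^ 2 := by rw [h2, h3, mul_one]
      _ ≤ 3 * 2 ^ (n - 1) * ((1 : ℝ) / m) ^ 2 := by
          have : (1 : ℝ) ≤ 3 * 2 ^ (n - 1) := by
            have h' : (1 : ℝ) ≤ 2 ^ (n - 1) := one_le_pow₀ (by norm_num)
            linarith
          nlinarith [sq_nonneg ((1 : ℝ) / m)]
  · simp

lemma Gfun_nonneg (n m : ℕ) : 0 ≤ Gfun n m := by
  rw [Gfun]; split <;> positivity

lemma tsum_Gfun_le {n : ℕ} (hn : 3 ≤ n) : ∑' m, Gfun n m ≤ 3 / 4 := by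
  rw [← Summable.sum_add_tsum_nat_add 3 (Gfun_summable hn)]
  have hhead : ∑ i ∈ Finset.range 3, Gfun n i = 2 * ((1 : ℝ) / 2) ^ n := by
    rw [Finset.sum_range_succ, Finset.sum_range_succ, Finset.sum_range_one]
    rw [Gfun, Gfun, Gfun]
    norm_num
  have hhead_le : ∑ i ∈ Finset.range 3, Gfun n i ≤ 1 / 4 := by
    rw [hhead]
    have : ((1 : ℝ) / 2) ^ n ≤ ((1 : ℝ) / 2) ^ 3 :=
      pow_le_pow_of_le_one (by norm_num) (by norm_num) hn
    nlinarith
  have htail : ∑' k, Gfun n (k + 3) ≤ 1 / 2 := by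
    apply Real.tsum_le_of_sum_range_le (fun k => Gfun_nonneg n _)
    intro N
    have hterm : ∀ k : ℕ, Gfun n (k + 3) ≤ 1 / ((k : ℝ) + 2) - 1 / ((k : ℝ) + 3) := by
      intro k
      rw [Gfun, if_pos (by omega)]
      set x := (k : ℝ) with hx
      have hx0 : (0 : ℝ) ≤ x := by rw [hx]; positivity
      have hcast : ((k + 3 : ℕ) : ℝ) = x + 3 := by push_cast; ring
      rw [hcast]
      have h1 : ((1 : ℝ) / (x + 3)) ^ n ≤ ((1 : ℝ) / (x + 3)) ^ 3 :=
        pow_le_pow_of_le_one (by positivity)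
          (by rw [div_le_one (by linarith)]; linarith) hn
      have h2 : (x + 3) * ((1 : ℝ) / (x + 3)) ^ 3 = 1 / (x + 3) ^ 2 := by
        field_simp
      have h3 : 1 / ((x : ℝ) + 3) ^ 2 ≤ 1 / ((x + 2) * (x + 3)) := by
        apply one_div_le_one_div_of_le (by nlinarith)
        nlinarith
      have h4 : 1 / ((x + 2) * (x + 3)) = 1 / (x + 2) - 1 / (x + 3) := by
        field_simp
        ring
      calc (x + 3) * ((1 : ℝ) / (x + 3)) ^ n ≤ (x + 3) * ((1 : ℝ) / (x + 3)) ^ 3 :=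
            mul_le_mul_of_nonneg_left h1 (by linarith)
        _ = 1 / (x + 3) ^ 2 := h2
        _ ≤ 1 / ((x + 2) * (x + 3)) := h3
        _ = 1 / (x + 2) - 1 / (x + 3) := h4
    calc ∑ k ∈ Finset.range N, Gfun n (k + 3)
        ≤ ∑ k ∈ Finset.range N, (1 / ((k : ℝ) + 2) - 1 / ((k : ℝ) + 3)) :=
          Finset.sum_le_sum fun k _ => hterm k
      _ = 1 / 2 - 1 / ((N : ℝ) + 2) := by
          have := Finset.sum_range_sub' (f := fun k : ℕ => 1 / ((k : ℝ) + 2)) N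
          have heq : ∀ k : ℕ, 1 / ((k : ℝ) + 2) - 1 / ((k : ℝ) + 3) =
              (fun k : ℕ => 1 / ((k : ℝ) + 2)) k - (fun k : ℕ => 1 / ((k : ℝ) + 2)) (k + 1) := by
            intro k
            push_cast
            ring_nf
          rw [Finset.sum_congr rfl fun k _ => heq k, this]
          norm_num
      _ ≤ 1 / 2 := by
          have : (0 : ℝ) ≤ 1 / ((N : ℝ) + 2) := by positivity
          linarith
  linarith

lemma limsup_ratio_le {n : ℕ} (hn : 2 < n) :
    limsup (fun H : ℕ =>
        (Nat.card (CbarSet n H) : ℝ) / (2 * (H : ℝ) * (2 * (H : ℝ) + 1) ^ n)) atTop ≤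
      3 / 4 := by
  have hn3 : 3 ≤ n := hn
  set u : ℕ → ℝ := fun H =>
    (Nat.card (CbarSet n H) : ℝ) / (2 * (H : ℝ) * (2 * (H : ℝ) + 1) ^ n) with hu
  set v : ℕ → ℝ := fun H => ∑' m, Ffun n H m with hv
  have hle : ∀ᶠ H in atTop, u H ≤ v H := by
    filter_upwards [eventually_ge_atTop 1] with H hH
    exact ratio_le hn hH
  have hco : IsCoboundedUnder (· ≤ ·) atTop u :=
    isCoboundedUnder_le_of_le atTop (x := 0) fun H => by
      rw [hu]
      positivity
  have hbd : IsBoundedUnder (· ≤ ·) atTop v :=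
    (tsum_Ffun_tendsto hn3).isBoundedUnder_le
  calc limsup u atTop ≤ limsup v atTop := limsup_le_limsup hle hco hbd
    _ = ∑' m, Gfun n m := (tsum_Ffun_tendsto hn3).limsup_eq
    _ ≤ 3 / 4 := tsum_Gfun_le hn3

lemma primes_summable : Summable (fun p : Nat.Primes => 1 / ((p : ℕ) : ℝ) ^ 2) := by
  have hf : Summable (fun m : ℕ => 1 / (m : ℝ) ^ 2) :=
    (Real.summable_one_div_nat_pow (p := 2)).mpr (by norm_num)
  have := (summable_subtype_iff_indicator
    (s := {m : ℕ | Nat.Prime m}) (f := fun m : ℕ => 1 / (m : ℝ) ^ 2)).mpr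
    (hf.indicator _)
  exact this

lemma primes_tsum_nonneg : 0 ≤ ∑' p : Nat.Primes, 1 / ((p : ℕ) : ℝ) ^ 2 :=
  tsum_nonneg fun p => by positivity

lemma primes_tsum_lb : (361 : ℝ) / 900 ≤ ∑' p : Nat.Primes, 1 / ((p : ℕ) : ℝ) ^ 2 := by
  classical
  set s : Finset Nat.Primes :=
    {(show Nat.Primes from ⟨2, by norm_num⟩), (show Nat.Primes from ⟨3, by norm_num⟩), (show Nat.Primes from ⟨5, by norm_num⟩)} with hs
  have hsum : ∑ p ∈ s, 1 / ((p : ℕ) : ℝ) ^ 2 = 361 / 900 := by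
    rw [hs]
    rw [Finset.sum_insert (by decide), Finset.sum_insert (by decide),
      Finset.sum_singleton]
    norm_num
  rw [← hsum]
  exact Summable.sum_le_tsum s (fun p _ => by positivity) primes_summable

lemma primes_tsum_ub : ∑' p : Nat.Primes, 1 / ((p : ℕ) : ℝ) ^ 2 ≤ 4784 / 10000 := by
  classical
  set f : ℕ → ℝ := fun m => 1 / (m : ℝ) ^ 2 with hf
  set ind : ℕ → ℝ := Set.indicator {m : ℕ | Nat.Prime m} f with hind
  have hf_sum : Summable f := (Real.summable_one_div_nat_pow (p := 2)).mpr (by norm_num)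
  have hind_sum : Summable ind := hf_sum.indicator _
  have heq : ∑' p : Nat.Primes, 1 / ((p : ℕ) : ℝ) ^ 2 = ∑' m : ℕ, ind m := by
    rw [hind, ← tsum_subtype]
    rfl
  rw [heq, ← Summable.sum_add_tsum_nat_add 31 hind_sum]
  have hhead : ∑ m ∈ Finset.range 31, ind m =
      1/4 + 1/9 + 1/25 + 1/49 + 1/121 + 1/169 + 1/289 + 1/361 + 1/529 + 1/841 := by
    rw [hind, hf]
    simp only [Finset.sum_range_succ, Finset.sum_range_zero, Set.indicator_apply,
      Set.mem_setOf_eq]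
    norm_num
  have htail : ∑' k, ind (k + 31) ≤ 1 / 30 := by
    apply Real.tsum_le_of_sum_range_le (fun k => Set.indicator_nonneg (fun m _ => by positivity) _)
    intro N
    have hterm : ∀ k : ℕ, ind (k + 31) ≤ 1 / ((k : ℝ) + 30) - 1 / ((k : ℝ) + 31) := by
      intro k
      set x := (k : ℝ) with hx
      have hx0 : (0 : ℝ) ≤ x := by rw [hx]; positivity
      have h0 : ind (k + 31) ≤ f (k + 31) :=
        Set.indicator_le_self' (fun m _ => by rw [hf]; positivity) _
      have hcast : ((k + 31 : ℕ) : ℝ) = x + 31 := by push_cast; ring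
      have h1 : f (k + 31) = 1 / (x + 31) ^ 2 := by simp only [hf]; rw [hcast]
      have h2 : 1 / (x + 31) ^ 2 ≤ 1 / ((x + 30) * (x + 31)) := by
        apply one_div_le_one_div_of_le (by nlinarith)
        nlinarith
      have h3 : 1 / ((x + 30) * (x + 31)) = 1 / (x + 30) - 1 / (x + 31) := by
        field_simp
        ring
      calc ind (k + 31) ≤ f (k + 31) := h0
        _ = 1 / (x + 31) ^ 2 := h1
        _ ≤ 1 / ((x + 30) * (x + 31)) := h2
        _ = 1 / (x + 30) - 1 / (x + 31) := h3
    calc ∑ k ∈ Finset.range N, ind (k + 31)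
        ≤ ∑ k ∈ Finset.range N, (1 / ((k : ℝ) + 30) - 1 / ((k : ℝ) + 31)) :=
          Finset.sum_le_sum fun k _ => hterm k
      _ = 1 / 30 - 1 / ((N : ℝ) + 30) := by
          have hts := Finset.sum_range_sub' (f := fun k : ℕ => 1 / ((k : ℝ) + 30)) N
          have heq' : ∀ k : ℕ, 1 / ((k : ℝ) + 30) - 1 / ((k : ℝ) + 31) =
              (fun k : ℕ => 1 / ((k : ℝ) + 30)) k -
                (fun k : ℕ => 1 / ((k : ℝ) + 30)) (k + 1) := by
            intro k
            push_cast
            ring_nf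
          rw [Finset.sum_congr rfl fun k _ => heq' k, hts]
          norm_num
      _ ≤ 1 / 30 := by
          have : (0 : ℝ) ≤ 1 / ((N : ℝ) + 30) := by positivity
          linarith
  rw [hhead]
  have : (1:ℝ)/4 + 1/9 + 1/25 + 1/49 + 1/121 + 1/169 + 1/289 + 1/361 + 1/529 + 1/841 + 1/30
      ≤ 4784 / 10000 := by norm_num
  linarith

lemma sinh_lt : Real.sinh (4784 / 10000) < 1 / 2 := by
  have hq1 : |(4784 : ℝ) / 10000| ≤ 1 := by
    rw [abs_of_nonneg (by norm_num)]
    norm_num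
  have hq2 : |(-(4784 : ℝ) / 10000)| ≤ 1 := by
    rw [abs_div, abs_neg, abs_of_nonneg (by norm_num : (0:ℝ) ≤ (4784:ℝ)),
      abs_of_nonneg (by norm_num : (0:ℝ) ≤ (10000:ℝ))]
    norm_num
  have h1 := Real.exp_bound hq1 (by norm_num : 0 < 6)
  have h2 := Real.exp_bound (x := -(4784 : ℝ) / 10000) hq2 (by norm_num : 0 < 6)
  rw [abs_le] at h1 h2
  simp only [Finset.sum_range_succ, Finset.sum_range_zero] at h1 h2
  rw [Real.sinh_eq]
  have e : -((4784 : ℝ) / 10000) = -(4784 : ℝ) / 10000 := by ring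
  rw [e]
  norm_num [Nat.factorial] at h1 h2 ⊢
  obtain ⟨h1a, h1b⟩ := h1
  obtain ⟨h2a, h2b⟩ := h2
  have habs : |(299 : ℝ) / 625| = 299 / 625 := by
    rw [abs_of_nonneg (by norm_num)]
  linarith

/-- For every `n > 2`: `limsup_{H→∞} #C̄_n(H)/(2H(2H+1)ⁿ) ≤ 2 sinh(∑_p 1/p²) < 1`. -/
theorem limsup_card_CbarSet (n : ℕ) (hn : 2 < n) :
    limsup (fun H : ℕ =>
        (Nat.card (CbarSet n H) : ℝ) / (2 * (H : ℝ) * (2 * (H : ℝ) + 1)^n)) atTop ≤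
      2 * Real.sinh (∑' p : Nat.Primes, 1 / ((p : ℕ) : ℝ)^2) ∧
    2 * Real.sinh (∑' p : Nat.Primes, 1 / ((p : ℕ) : ℝ)^2) < 1 := by
  set P2 := ∑' p : Nat.Primes, 1 / ((p : ℕ) : ℝ) ^ 2 with hP2
  have hsinh : P2 ≤ Real.sinh P2 := Real.self_le_sinh_iff.mpr primes_tsum_nonneg
  constructor
  · calc limsup (fun H : ℕ =>
        (Nat.card (CbarSet n H) : ℝ) / (2 * (H : ℝ) * (2 * (H : ℝ) + 1)^n)) atTop
        ≤ 3 / 4 := limsup_ratio_le hn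
      _ ≤ 2 * P2 := by
          have := primes_tsum_lb
          rw [← hP2] at this
          linarith
      _ ≤ 2 * Real.sinh P2 := by linarith
  · have h1 : Real.sinh P2 ≤ Real.sinh (4784 / 10000) := by
      apply Real.sinh_le_sinh.mpr
      rw [hP2]
      exact primes_tsum_ub
    have h2 := sinh_lt
    linarith
end

section
/- For every integer n > 2, liminf_{H→∞} #(I_n(H) \ C̄_n(H)) / #I_n(H) > 0. -/
open Polynomial Filter

/-- `I_n(H)`: irreducible polynomials of degree exactly `n` over `ℤ` of height at most `H`. -/
def irredSet (n H : ℕ) : Set (Polynomial ℤ) :=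
  {f | f.natDegree = n ∧ polyHeight f ≤ H ∧ Irreducible f}

/- ### Auxiliary material -/

namespace ShiftEisAux

open Finset


lemma int_ediv_real_le (a : ℤ) (M : ℤ) (hM : 0 < M) : ((a / M : ℤ) : ℝ) ≤ (a : ℝ) / M := by
  rw [le_div_iff₀ (by exact_mod_cast hM)]
  have h := Int.ediv_mul_le a hM.ne'
  exact_mod_cast h

lemma card_AP (H : ℕ) (M : ℤ) (hM : 0 < M) (T : Finset ℤ)
    (hT : ∀ x ∈ T, x ∈ Finset.Icc (-(H:ℤ)) H)
    (hAP : ∀ x ∈ T, ∀ y ∈ T, M ∣ x - y) :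
    (T.card : ℝ) ≤ 2 * H / M + 1 := by
  have hMR : (0:ℝ) < (M:ℝ) := by exact_mod_cast hM
  rcases T.eq_empty_or_nonempty with rfl | ⟨x₀, hx₀⟩
  · simp; positivity
  have key : T.card ≤ (Finset.Icc (-(((H:ℤ) + x₀) / M)) (((H:ℤ) - x₀) / M)).card := by
    apply Finset.card_le_card_of_injOn (fun x => (x - x₀) / M)
    · intro x hx
      obtain ⟨k, hk⟩ := hAP x hx x₀ hx₀
      have hxI := hT x hx
      have hx0I := hT x₀ hx₀
      simp only [Finset.mem_Icc] at hxI hx0I ⊢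
      rw [hk, Int.mul_ediv_cancel_left _ hM.ne']
      rw [Finset.mem_coe, Finset.mem_Icc]
      constructor
      · rw [neg_le, Int.le_ediv_iff_mul_le hM]
        nlinarith
      · rw [Int.le_ediv_iff_mul_le hM]
        nlinarith
    · intro x hx y hy hxy
      have hdx := hAP x hx x₀ hx₀
      have hdy := hAP y hy x₀ hx₀
      have h2 : (x - x₀) / M * M = (y - x₀) / M * M := by
        simp only at hxy; rw [hxy]
      rw [Int.ediv_mul_cancel hdx, Int.ediv_mul_cancel hdy] at h2
      linarith
  have h1 : (T.card : ℝ) ≤ ((Finset.Icc (-(((H:ℤ) + x₀) / M)) (((H:ℤ) - x₀) / M)).card : ℝ) := by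
    exact_mod_cast key
  refine h1.trans ?_
  rw [Int.card_Icc]
  set z : ℤ := ((H:ℤ) - x₀) / M + 1 - -(((H:ℤ) + x₀) / M) with hz
  rcases le_or_gt z 0 with hz0 | hz0
  · rw [Int.toNat_of_nonpos hz0]
    simp
    positivity
  · have hcast : ((z.toNat : ℕ) : ℝ) = ((z:ℤ) : ℝ) := by
      exact_mod_cast congrArg (Int.cast : ℤ → ℝ) (Int.toNat_of_nonneg hz0.le)
    rw [hcast]
    have hb1 := int_ediv_real_le ((H:ℤ) - x₀) M hM
    have hb2 := int_ediv_real_le ((H:ℤ) + x₀) M hM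
    have hx0I := hT x₀ hx₀
    simp only [Finset.mem_Icc] at hx0I
    have hsum : ((H:ℝ) - (x₀:ℝ)) / M + ((H:ℝ) + (x₀:ℝ)) / M = 2 * H / M := by ring
    push_cast [hz]
    push_cast at hb1 hb2
    linarith

lemma card_parity (H : ℕ) (e : ZMod 2) :
    (H : ℝ) ≤ (((Finset.Icc (-(H:ℤ)) H).filter (fun x : ℤ => ((x : ZMod 2) = e))).card : ℝ) := by
  set t : ℤ := if ((H:ℤ) : ZMod 2) = e then 0 else 1 with ht
  have key : (Finset.Icc (0:ℤ) ((H:ℤ) - 1)).card ≤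
      ((Finset.Icc (-(H:ℤ)) H).filter (fun x : ℤ => ((x : ZMod 2) = e))).card := by
    apply Finset.card_le_card_of_injOn (fun j => 2 * j - H + t)
    · intro j hj
      simp only [Finset.mem_coe, Finset.mem_Icc] at hj
      simp only [Finset.mem_coe, Finset.mem_filter, Finset.mem_Icc]
      have htb : 0 ≤ t ∧ t ≤ 1 := by
        rw [ht]; split <;> simp
      refine ⟨⟨by omega, by omega⟩, ?_⟩
      have hc2 : ((2 * j - (H:ℤ) + t : ℤ) : ZMod 2) = (t : ZMod 2) - ((H:ℤ) : ZMod 2) := by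
        push_cast
        ring_nf
        rw [show (2 : ZMod 2) = 0 by decide]
        ring
      rw [hc2]
      by_cases h : ((H:ℤ) : ZMod 2) = e
      · rw [ht, if_pos h, h]
        have : ∀ u : ZMod 2, ((0:ℤ) : ZMod 2) - u = u := by decide
        exact this e
      · rw [ht, if_neg h]
        have : ∀ u v : ZMod 2, u ≠ v → ((1:ℤ) : ZMod 2) - u = v := by decide
        exact this _ _ h
    · intro x _ y _ h
      simp only at h
      omega
  have hc : (Finset.Icc (0:ℤ) ((H:ℤ) - 1)).card = H := by
    rw [Int.card_Icc]; omega
  calc (H:ℝ) = ((Finset.Icc (0:ℤ) ((H:ℤ) - 1)).card : ℝ) := by rw [hc]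
    _ ≤ _ := by exact_mod_cast key


noncomputable def toPoly (m : ℕ) (a : Fin (m+1) → ℤ) : Polynomial ℤ :=
  ∑ i : Fin (m+1), C (a i) * X ^ (i : ℕ)

lemma coeff_toPoly (m : ℕ) (a : Fin (m+1) → ℤ) (j : ℕ) :
    (toPoly m a).coeff j = if h : j < m + 1 then a ⟨j, h⟩ else 0 := by
  rw [toPoly, finset_sum_coeff]
  simp only [coeff_C_mul, coeff_X_pow, mul_ite, mul_one, mul_zero]
  split
  · next h =>
    rw [Finset.sum_eq_single (⟨j, h⟩ : Fin (m+1))]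
    · simp
    · intro b _ hb
      simp only [ite_eq_right_iff]
      intro hj; exact absurd (Fin.ext hj.symm) hb
    · simp
  · next h =>
    apply Finset.sum_eq_zero
    intro b _
    simp only [ite_eq_right_iff]
    intro hj; exact absurd (hj ▸ b.isLt) h

lemma coeff_toPoly_lt (m : ℕ) (a : Fin (m+1) → ℤ) (i : Fin (m+1)) :
    (toPoly m a).coeff i = a i := by
  rw [coeff_toPoly]; simp [i.isLt]

lemma natDegree_toPoly_le (m : ℕ) (a : Fin (m+1) → ℤ) : (toPoly m a).natDegree ≤ m := by
  apply natDegree_le_iff_coeff_eq_zero.2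
  intro N hN
  rw [coeff_toPoly]
  simp [Nat.not_lt.2 hN]

lemma toPoly_injective (m : ℕ) : Function.Injective (toPoly m) := by
  intro a b h
  funext i
  rw [← coeff_toPoly_lt m a i, ← coeff_toPoly_lt m b i, h]

lemma toPoly_coeffs (f : Polynomial ℤ) (m : ℕ) (hf : f.natDegree ≤ m) :
    toPoly m (fun i => f.coeff i) = f := by
  ext j
  rw [coeff_toPoly]
  split
  · rfl
  · next h => exact (coeff_eq_zero_of_natDegree_lt (lt_of_le_of_lt hf (by omega))).symm


noncomputable def coeffSet (H : ℕ) (e : ZMod 2) : Finset ℤ :=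
  (Finset.Icc (-(H:ℤ)) H).filter (fun x : ℤ => ((x : ZMod 2) = e))

noncomputable def classBox (n H : ℕ) (g₀ : Polynomial (ZMod 2)) (p : ℕ) (c r : ZMod p) :
    Finset (Fin (n+1) → ℤ) :=
  Fintype.piFinset (fun i =>
    (coeffSet H (g₀.coeff i)).filter (fun x : ℤ => ((x : ZMod p) = (C c * (X + C r)^n).coeff i)))

noncomputable def famBox (n H : ℕ) (g₀ : Polynomial (ZMod 2)) : Finset (Fin (n+1) → ℤ) :=
  Fintype.piFinset (fun i => coeffSet H (g₀.coeff i))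

noncomputable def badP (n H : ℕ) (g₀ : Polynomial (ZMod 2)) (p : ℕ) : Finset (Fin (n+1) → ℤ) :=
  @Finset.filter _
    (fun a => ∃ c r : ZMod p, ∀ i : Fin (n+1), ((a i : ZMod p) = (C c * (X + C r)^n).coeff i))
    (fun _ => Classical.propDecidable _) (famBox n H g₀)

lemma mem_badP {n H : ℕ} {g₀ : Polynomial (ZMod 2)} {p : ℕ} {a : Fin (n+1) → ℤ} :
    a ∈ badP n H g₀ p ↔ a ∈ famBox n H g₀ ∧
      ∃ c r : ZMod p, ∀ i : Fin (n+1), ((a i : ZMod p) = (C c * (X + C r)^n).coeff i) := by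
  unfold badP
  exact @Finset.mem_filter _ _ (fun _ => Classical.propDecidable _) _ _

lemma card_famBox_ge (n H : ℕ) (g₀ : Polynomial (ZMod 2)) :
    ((H:ℝ))^(n+1) ≤ ((famBox n H g₀).card : ℝ) := by
  rw [famBox, Fintype.card_piFinset]
  push_cast
  rw [show ((H:ℝ))^(n+1) = ∏ _i : Fin (n+1), (H:ℝ) by simp]
  apply Finset.prod_le_prod (by intro i _; positivity)
  intro i _
  exact card_parity H (g₀.coeff i)

lemma card_classFilter_le (H : ℕ) (e : ZMod 2) (p : ℕ) (hp : p.Prime) (hodd : p ≠ 2) (b : ZMod p) :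
    ((((coeffSet H e).filter (fun x : ℤ => ((x : ZMod p) = b))).card : ℝ)) ≤ (H:ℝ)/p + 1 := by
  have hppos : (0:ℤ) < (2 * p : ℤ) := by have := hp.pos; omega
  have key := card_AP H (2 * p) hppos ((coeffSet H e).filter (fun x : ℤ => ((x : ZMod p) = b)))
    (by
      intro x hx
      simp only [coeffSet, Finset.mem_filter, Finset.mem_Icc] at hx
      exact Finset.mem_Icc.2 ⟨hx.1.1.1, hx.1.1.2⟩)
    (by
      intro x hx y hy
      simp only [coeffSet, Finset.mem_filter, Finset.mem_Icc] at hx hy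
      have h2 : (2:ℤ) ∣ x - y := by
        have : ((x - y : ℤ) : ZMod 2) = 0 := by push_cast [hx.1.2, hy.1.2]; ring
        exact_mod_cast (ZMod.intCast_zmod_eq_zero_iff_dvd _ 2).1 this
      have hpd : ((p:ℤ)) ∣ x - y := by
        have : ((x - y : ℤ) : ZMod p) = 0 := by push_cast [hx.2, hy.2]; ring
        exact_mod_cast (ZMod.intCast_zmod_eq_zero_iff_dvd _ p).1 this
      have hcop : IsCoprime (2:ℤ) ((p:ℤ)) := by
        rw [Int.isCoprime_iff_gcd_eq_one]
        have := (Nat.coprime_primes Nat.prime_two hp).2 (fun h => hodd h.symm)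
        simpa [Int.gcd] using this
      exact hcop.mul_dvd h2 hpd)
  refine key.trans (le_of_eq ?_)
  have hpne : (p:ℝ) ≠ 0 := by exact_mod_cast hp.pos.ne'
  push_cast
  field_simp

lemma card_badP_le (n H : ℕ) (g₀ : Polynomial (ZMod 2)) (p : ℕ) (hp : p.Prime) (hodd : p ≠ 2) :
    (((badP n H g₀ p).card : ℝ)) ≤ (p:ℝ)^2 * ((H:ℝ)/p + 1)^(n+1) := by
  classical
  haveI : NeZero p := ⟨hp.pos.ne'⟩
  have hsub : badP n H g₀ p ⊆
      (Finset.univ : Finset (ZMod p × ZMod p)).biUnion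
        (fun cr => classBox n H g₀ p cr.1 cr.2) := by
    intro a ha
    obtain ⟨hfam, c, r, hcr⟩ := mem_badP.1 ha
    apply Finset.mem_biUnion.2 ⟨(c, r), Finset.mem_univ _, ?_⟩
    rw [classBox, Fintype.mem_piFinset]
    intro i
    rw [Finset.mem_filter]
    exact ⟨(Fintype.mem_piFinset.1 hfam) i, hcr i⟩
  have h1 : ((badP n H g₀ p).card : ℝ) ≤
      ∑ cr : ZMod p × ZMod p, ((classBox n H g₀ p cr.1 cr.2).card : ℝ) := by
    calc ((badP n H g₀ p).card : ℝ)
        ≤ (((Finset.univ : Finset (ZMod p × ZMod p)).biUnion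
            (fun cr => classBox n H g₀ p cr.1 cr.2)).card : ℝ) := by
          exact_mod_cast Finset.card_le_card hsub
      _ ≤ _ := by exact_mod_cast Finset.card_biUnion_le
  refine h1.trans ?_
  have hclass : ∀ cr : ZMod p × ZMod p,
      ((classBox n H g₀ p cr.1 cr.2).card : ℝ) ≤ ((H:ℝ)/p + 1)^(n+1) := by
    intro cr
    rw [classBox, Fintype.card_piFinset]
    push_cast
    rw [show ((H:ℝ)/p + 1)^(n+1) = ∏ _i : Fin (n+1), ((H:ℝ)/p + 1) by simp]
    apply Finset.prod_le_prod (by intro i _; positivity)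
    intro i _
    exact card_classFilter_le H _ p hp hodd _
  calc ∑ cr : ZMod p × ZMod p, ((classBox n H g₀ p cr.1 cr.2).card : ℝ)
      ≤ ∑ _cr : ZMod p × ZMod p, ((H:ℝ)/p + 1)^(n+1) := Finset.sum_le_sum (fun cr _ => hclass cr)
    _ = (p:ℝ)^2 * ((H:ℝ)/p + 1)^(n+1) := by
        rw [Finset.sum_const, Finset.card_univ, Fintype.card_prod, ZMod.card]
        push_cast; ring


lemma sum_inv_sq_le' (a : ℕ) (ha : 1 ≤ a) : ∀ b : ℕ, a ≤ b →
    ∑ m ∈ Finset.Icc (a+1) b, (1:ℝ)/(m:ℝ)^2 ≤ 1/a - 1/b := by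
  refine Nat.le_induction ?_ ?_
  · rw [Finset.Icc_eq_empty (by omega)]
    simp
  · intro b hb ih
    rw [← Finset.insert_Icc_right_eq_Icc_add_one (by omega), Finset.sum_insert (by simp)]
    have hb1 : (1:ℝ) ≤ (b:ℝ) := by exact_mod_cast ha.trans hb
    have h2 : (1:ℝ)/((b:ℝ)+1)^2 ≤ 1/b - 1/(b+1) := by
      rw [div_sub_div _ _ (by linarith) (by linarith)]
      rw [div_le_div_iff₀ (by positivity) (by positivity)]
      ring_nf
      nlinarith
    push_cast
    linarith

lemma sum_inv_sq_le (a b : ℕ) (ha : 1 ≤ a) :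
    ∑ m ∈ Finset.Icc (a+1) b, (1:ℝ)/(m:ℝ)^2 ≤ 1/a := by
  rcases le_or_gt a b with h | h
  · have := sum_inv_sq_le' a ha b h
    have hb : (0:ℝ) < b := by
      have : 1 ≤ b := ha.trans h
      exact_mod_cast this
    have : (0:ℝ) ≤ 1/b := by positivity
    linarith [sum_inv_sq_le' a ha b h]
  · rw [Finset.Icc_eq_empty (by omega)]
    simp


lemma pow_one_add_le (m : ℕ) (x : ℝ) (hx : 0 ≤ x) (h : (m:ℝ) * x ≤ 1/18) :
    (1 + x)^m ≤ 18/17 := by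
  rcases Nat.eq_zero_or_pos m with rfl | hm
  · norm_num
  have hx1 : x ≤ 1 := by
    have : (1:ℝ) ≤ (m:ℝ) := by exact_mod_cast hm
    nlinarith
  have hb : 1 + (m:ℝ) * (-x) ≤ (1 + (-x))^m := by
    apply one_add_mul_le_pow
    linarith
  have h1 : (17:ℝ)/18 ≤ (1 - x)^m := by
    have : (1:ℝ) - (m:ℝ)*x ≥ 17/18 := by linarith
    calc (17:ℝ)/18 ≤ 1 - (m:ℝ)*x := by linarith
      _ = 1 + (m:ℝ) * (-x) := by ring
      _ ≤ (1 + (-x))^m := hb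
      _ = (1 - x)^m := by ring_nf
  have h2 : (1 + x)^m * (1 - x)^m ≤ 1 := by
    rw [← mul_pow]
    have : (1+x)*(1-x) = 1 - x^2 := by ring
    rw [this]
    apply pow_le_one₀ <;> nlinarith
  have hpos : (0:ℝ) < (1-x)^m := by positivity
  rw [← mul_le_mul_iff_of_pos_right hpos]
  calc (1+x)^m * (1-x)^m ≤ 1 := h2
    _ ≤ 18/17 * (17/18) := by norm_num
    _ ≤ 18/17 * (1-x)^m := by nlinarith

lemma badsum_le (n H : ℕ) (hn : 2 < n) (g₀ : Polynomial (ZMod 2))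
    (hH : 18*(n+1)*2^(n+5) ≤ H) :
    ∑ p ∈ (Finset.Icc 3 H).filter Nat.Prime, ((badP n H g₀ p).card : ℝ)
      ≤ 3/4 * (H:ℝ)^(n+1) := by
  classical
  set K : ℕ := 2^(n+5) with hK
  have hK1 : 1 ≤ K := Nat.one_le_two_pow
  have hH1 : 1 ≤ H := by
    have h1 : K ≤ 18*(n+1)*K := Nat.le_mul_of_pos_left K (by omega)
    omega
  have hHR : (0:ℝ) < (H:ℝ) := by exact_mod_cast hH1
  set S : Finset ℕ := (Finset.Icc 3 H).filter Nat.Prime with hS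
  have hmem : ∀ p ∈ S, 3 ≤ p ∧ p ≤ H ∧ p.Prime := by
    intro p hp
    simp only [hS, Finset.mem_filter, Finset.mem_Icc] at hp
    exact ⟨hp.1.1, hp.1.2, hp.2⟩
  have hterm : ∀ p ∈ S, ((badP n H g₀ p).card : ℝ) ≤ ((H:ℝ)+p)^(n+1) / (p:ℝ)^2 := by
    intro p hp
    obtain ⟨h3, hpH, hprime⟩ := hmem p hp
    have hpR : (0:ℝ) < (p:ℝ) := by exact_mod_cast hprime.pos
    have hpR1 : (1:ℝ) ≤ (p:ℝ) := by exact_mod_cast hprime.one_lt.le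
    have h1 := card_badP_le n H g₀ p hprime (by omega)
    refine h1.trans ?_
    have hpn : (p:ℝ)^(n+1) = (p:ℝ)^(n-1) * (p:ℝ)^2 := by
      rw [← pow_add]; congr 1; omega
    have h2 : (p:ℝ)^2 * ((H:ℝ)/p + 1)^(n+1) = ((H:ℝ)+p)^(n+1) / (p:ℝ)^(n-1) := by
      rw [show (H:ℝ)/p + 1 = ((H:ℝ)+p)/p by field_simp]
      rw [div_pow, hpn]
      field_simp
    rw [h2]
    apply div_le_div_of_nonneg_left (by positivity) (by positivity)
    exact pow_le_pow_right₀ hpR1 (by omega)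
  have hpart1 : ∑ p ∈ S.filter (fun p => p ≤ K), ((badP n H g₀ p).card : ℝ)
      ≤ 9/17 * (H:ℝ)^(n+1) := by
    have hHK : ((H:ℝ)+K)^(n+1) ≤ 18/17 * (H:ℝ)^(n+1) := by
      have hcast : 18*((n:ℕ):ℝ)*(K:ℝ) + 18*(K:ℝ) ≤ (H:ℝ) := by
        have : ((18*(n+1)*K : ℕ):ℝ) ≤ (H:ℝ) := by exact_mod_cast hH
        push_cast at this
        nlinarith
      have hKR : (0:ℝ) < (K:ℝ) := by exact_mod_cast hK1
      have hxh : (((n+1:ℕ)):ℝ) * ((K:ℝ)/H) ≤ 1/18 := by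
        rw [mul_div_assoc', div_le_div_iff₀ hHR (by norm_num : (0:ℝ) < 18)]
        push_cast
        nlinarith
      have hb := pow_one_add_le (n+1) ((K:ℝ)/H) (by positivity) hxh
      have heq : ((H:ℝ)+K)^(n+1) = (1 + (K:ℝ)/H)^(n+1) * (H:ℝ)^(n+1) := by
        rw [← mul_pow]
        congr 1
        field_simp
      rw [heq]
      nlinarith [pow_pos hHR (n+1)]
    calc ∑ p ∈ S.filter (fun p => p ≤ K), ((badP n H g₀ p).card : ℝ)
        ≤ ∑ p ∈ S.filter (fun p => p ≤ K), ((H:ℝ)+K)^(n+1) * (1/(p:ℝ)^2) := by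
          apply Finset.sum_le_sum
          intro p hp
          have hp' := Finset.mem_filter.1 hp
          obtain ⟨h3, hpH, hprime⟩ := hmem p hp'.1
          have hpR : (0:ℝ) < (p:ℝ) := by exact_mod_cast hprime.pos
          refine (hterm p hp'.1).trans ?_
          rw [mul_one_div]
          apply div_le_div_of_nonneg_right ?_ (by positivity)
          apply pow_le_pow_left₀ (by positivity)
          have : (p:ℝ) ≤ (K:ℝ) := by exact_mod_cast hp'.2
          linarith
      _ = ((H:ℝ)+K)^(n+1) * ∑ p ∈ S.filter (fun p => p ≤ K), (1/(p:ℝ)^2) := by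
          rw [Finset.mul_sum]
      _ ≤ ((H:ℝ)+K)^(n+1) * (1/2) := by
          apply mul_le_mul_of_nonneg_left ?_ (by positivity)
          have hsub : S.filter (fun p => p ≤ K) ⊆ Finset.Icc (2+1) K := by
            intro p hp
            have hp' := Finset.mem_filter.1 hp
            obtain ⟨h3, hpH, _⟩ := hmem p hp'.1
            exact Finset.mem_Icc.2 ⟨h3, hp'.2⟩
          calc ∑ p ∈ S.filter (fun p => p ≤ K), (1/(p:ℝ)^2)
              ≤ ∑ m' ∈ Finset.Icc (2+1) K, (1/(m':ℝ)^2) :=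
                Finset.sum_le_sum_of_subset_of_nonneg hsub (by intros; positivity)
            _ ≤ 1/2 := by simpa using sum_inv_sq_le 2 K (by norm_num)
      _ ≤ 18/17 * (H:ℝ)^(n+1) * (1/2) := by
          apply mul_le_mul_of_nonneg_right hHK (by norm_num)
      _ = 9/17 * (H:ℝ)^(n+1) := by ring
  have hpart2 : ∑ p ∈ S.filter (fun p => ¬ p ≤ K), ((badP n H g₀ p).card : ℝ)
      ≤ 1/16 * (H:ℝ)^(n+1) := by
    have hKR : ((K:ℕ):ℝ) = 2^(n+5) := by rw [hK]; push_cast; ring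
    calc ∑ p ∈ S.filter (fun p => ¬ p ≤ K), ((badP n H g₀ p).card : ℝ)
        ≤ ∑ p ∈ S.filter (fun p => ¬ p ≤ K), (2*(H:ℝ))^(n+1) * (1/(p:ℝ)^2) := by
          apply Finset.sum_le_sum
          intro p hp
          have hp' := Finset.mem_filter.1 hp
          obtain ⟨h3, hpH, hprime⟩ := hmem p hp'.1
          have hpR : (0:ℝ) < (p:ℝ) := by exact_mod_cast hprime.pos
          refine (hterm p hp'.1).trans ?_
          rw [mul_one_div]
          apply div_le_div_of_nonneg_right ?_ (by positivity)
          apply pow_le_pow_left₀ (by positivity)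
          have : (p:ℝ) ≤ (H:ℝ) := by exact_mod_cast hpH
          linarith
      _ = (2*(H:ℝ))^(n+1) * ∑ p ∈ S.filter (fun p => ¬ p ≤ K), (1/(p:ℝ)^2) := by
          rw [Finset.mul_sum]
      _ ≤ (2*(H:ℝ))^(n+1) * (1/(K:ℝ)) := by
          apply mul_le_mul_of_nonneg_left ?_ (by positivity)
          have hsub : S.filter (fun p => ¬ p ≤ K) ⊆ Finset.Icc (K+1) H := by
            intro p hp
            have hp' := Finset.mem_filter.1 hp
            obtain ⟨h3, hpH, _⟩ := hmem p hp'.1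
            have := hp'.2
            exact Finset.mem_Icc.2 ⟨by omega, hpH⟩
          calc ∑ p ∈ S.filter (fun p => ¬ p ≤ K), (1/(p:ℝ)^2)
              ≤ ∑ m' ∈ Finset.Icc (K+1) H, (1/(m':ℝ)^2) :=
                Finset.sum_le_sum_of_subset_of_nonneg hsub (by intros; positivity)
            _ ≤ 1/(K:ℝ) := sum_inv_sq_le K H hK1
      _ = 1/16 * (H:ℝ)^(n+1) := by
          rw [hKR, mul_pow]
          have h2 : (2:ℝ)^(n+5) = 2^(n+1)*16 := by
            rw [show n+5 = (n+1)+4 by omega, pow_add]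
            norm_num
          rw [h2]
          have : ((2:ℝ)^(n+1)) ≠ 0 := by positivity
          field_simp
  have hsplit := Finset.sum_filter_add_sum_filter_not S (fun p => p ≤ K)
    (fun p => ((badP n H g₀ p).card : ℝ))
  have : ∑ p ∈ S, ((badP n H g₀ p).card : ℝ) ≤ 9/17 * (H:ℝ)^(n+1) + 1/16 * (H:ℝ)^(n+1) := by
    rw [← hsplit]
    exact add_le_add hpart1 hpart2
  have hfin : (0:ℝ) ≤ (H:ℝ)^(n+1) := by positivity
  nlinarith


lemma shift_comp_eq (f : Polynomial ℤ) (s : ℤ) : (f.comp (X + C s)).comp (X - C s) = f := by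
  rw [comp_assoc]
  simp [add_comp, X_comp, C_comp]

lemma eis_shift_structure (f : Polynomial ℤ) (n : ℕ) (hn : 0 < n) (hf : f.natDegree = n)
    (p : ℕ) (s : ℤ) (hE : IsEisensteinWith (f.comp (X + C s)) p) :
    f.map (Int.castRingHom (ZMod p)) =
      C ((f.leadingCoeff : ZMod p)) * (X - C ((s : ZMod p)))^n ∧
    ((f.leadingCoeff : ZMod p) ≠ 0) ∧
    (p:ℤ) ∣ (f.comp (X + C s)).coeff 0 ∧ (f.comp (X + C s)).coeff 0 ≠ 0 := by
  set g := f.comp (X + C s) with hg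
  have hdg : g.natDegree = n := by
    rw [hg, natDegree_comp, natDegree_X_add_C, mul_one, hf]
  have hlcg : g.leadingCoeff = f.leadingCoeff := by
    rw [hg, leadingCoeff_comp (by rw [natDegree_X_add_C]; exact one_ne_zero)]
    have hm : (X + C s).leadingCoeff = 1 := monic_X_add_C s
    rw [hm, one_pow, mul_one]
  obtain ⟨hdvd, h0, hl⟩ := hE
  have hlne : ((f.leadingCoeff : ZMod p)) ≠ 0 := by
    rw [Ne, ZMod.intCast_zmod_eq_zero_iff_dvd]
    rw [hlcg] at hl
    exact hl
  have hmapg : g.map (Int.castRingHom (ZMod p)) = C ((f.leadingCoeff : ZMod p)) * X^n := by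
    ext j
    rw [coeff_map]
    simp only [coeff_C_mul, coeff_X_pow, eq_intCast]
    rcases lt_trichotomy j n with hj | hj | hj
    · rw [if_neg hj.ne, mul_zero]
      rw [ZMod.intCast_zmod_eq_zero_iff_dvd]
      exact hdvd j (hdg ▸ hj)
    · subst hj
      rw [if_pos rfl, mul_one]
      rw [← hdg, ← Polynomial.leadingCoeff, hlcg]
    · rw [if_neg hj.ne', mul_zero]
      rw [coeff_eq_zero_of_natDegree_lt (hdg ▸ hj)]
      simp
  have hcomp : f = g.comp (X - C s) := (shift_comp_eq f s).symm
  have hmapf : f.map (Int.castRingHom (ZMod p)) =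
      C ((f.leadingCoeff : ZMod p)) * (X - C ((s : ZMod p)))^n := by
    conv_lhs => rw [hcomp]
    rw [map_comp, hmapg]
    rw [Polynomial.map_sub, map_X, map_C]
    norm_num
  refine ⟨hmapf, hlne, ?_, ?_⟩
  · exact hdvd 0 (by omega)
  · intro hzero
    apply h0
    rw [show (f.comp (X + C s)).coeff 0 = g.coeff 0 from rfl] at hzero
    rw [hzero]
    exact dvd_zero _



lemma key_unit (f u v : Polynomial ℤ) (n : ℕ) (hn : 2 < n) (hdeg : f.natDegree = n)
    (g₀ : Polynomial (ZMod 2)) (hg₀ : Irreducible g₀) (hg₀d : g₀.natDegree = n)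
    (hmap2 : f.map (Int.castRingHom (ZMod 2)) = g₀)
    (hnoq : ∀ q : ℕ, q.Prime → q ≠ 2 → ¬ (∀ i, (q:ℤ) ∣ f.coeff i))
    (huv : f = u * v) (hu : IsUnit (u.map (Int.castRingHom (ZMod 2)))) : IsUnit u := by
  have hf0 : f ≠ 0 := by
    intro h
    rw [h] at hmap2
    simp at hmap2
    exact hg₀.ne_zero hmap2.symm
  have hu0 : u ≠ 0 := fun h => hf0 (by rw [huv, h, zero_mul])
  have hv0 : v ≠ 0 := fun h => hf0 (by rw [huv, h, mul_zero])
  have hmapeq : g₀ = (u.map (Int.castRingHom (ZMod 2))) * (v.map (Int.castRingHom (ZMod 2))) := by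
    rw [← Polynomial.map_mul, ← huv, hmap2]
  have humap0 : (u.map (Int.castRingHom (ZMod 2))) ≠ 0 := hu.ne_zero
  have hvmap0 : (v.map (Int.castRingHom (ZMod 2))) ≠ 0 := by
    intro h
    rw [h, mul_zero] at hmapeq
    exact hg₀.ne_zero hmapeq
  have hud : (u.map (Int.castRingHom (ZMod 2))).natDegree = 0 :=
    Polynomial.natDegree_eq_zero_of_isUnit hu
  have hvd : (v.map (Int.castRingHom (ZMod 2))).natDegree = n := by
    have := Polynomial.natDegree_mul humap0 hvmap0
    rw [← hmapeq, hg₀d, hud, zero_add] at this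
    exact this.symm
  have hvn : n ≤ v.natDegree := hvd ▸ Polynomial.natDegree_map_le
  have hsum : u.natDegree + v.natDegree = n := by
    rw [← hdeg, huv, Polynomial.natDegree_mul hu0 hv0]
  have hu_deg : u.natDegree = 0 := by omega
  obtain ⟨a, rfl⟩ : ∃ a, u = C a := ⟨u.coeff 0, Polynomial.eq_C_of_natDegree_eq_zero hu_deg⟩
  have ha0 : a ≠ 0 := fun h => hu0 (by rw [h, map_zero])
  rw [Polynomial.isUnit_C, Int.isUnit_iff_natAbs_eq]
  by_contra hna
  obtain ⟨q, hq, hqd⟩ := Nat.exists_prime_and_dvd hna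
  have hqa : (q:ℤ) ∣ a := dvd_trans (Int.natCast_dvd_natCast.2 hqd) (Int.natAbs_dvd.2 dvd_rfl)
  have hqall : ∀ i, (q:ℤ) ∣ f.coeff i := by
    intro i
    rw [huv, Polynomial.coeff_C_mul]
    exact Dvd.dvd.mul_right hqa _
  rcases eq_or_ne q 2 with rfl | hq2
  · apply hg₀.ne_zero
    rw [← hmap2]
    ext j
    rw [Polynomial.coeff_map, Polynomial.coeff_zero]
    have := hqall j
    rw [eq_intCast]
    exact (ZMod.intCast_zmod_eq_zero_iff_dvd _ 2).2 this
  · exact hnoq q hq hq2 hqall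

lemma irred_of_conditions (n : ℕ) (hn : 2 < n) (f : Polynomial ℤ) (hdeg : f.natDegree = n)
    (g₀ : Polynomial (ZMod 2)) (hg₀ : Irreducible g₀) (hg₀d : g₀.natDegree = n)
    (hmap2 : f.map (Int.castRingHom (ZMod 2)) = g₀)
    (hnoq : ∀ q : ℕ, q.Prime → q ≠ 2 → ¬ (∀ i, (q:ℤ) ∣ f.coeff i)) : Irreducible f := by
  constructor
  · intro hu
    have := Polynomial.natDegree_eq_zero_of_isUnit hu
    omega
  · intro u v huv
    have hmapeq : g₀ = (u.map (Int.castRingHom (ZMod 2))) * (v.map (Int.castRingHom (ZMod 2))) := by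
      rw [← Polynomial.map_mul, ← huv, hmap2]
    rcases hg₀.isUnit_or_isUnit hmapeq with h | h
    · exact Or.inl (key_unit f u v n hn hdeg g₀ hg₀ hg₀d hmap2 hnoq huv h)
    · refine Or.inr (key_unit f v u n hn hdeg g₀ hg₀ hg₀d hmap2 hnoq ?_ h)
      rw [huv, mul_comm]


/-- Existence of an irreducible polynomial of each degree over `𝔽₂`. -/
lemma exists_irred_zmod2 (n : ℕ) (hn : 0 < n) :
    ∃ g : Polynomial (ZMod 2), Irreducible g ∧ g.natDegree = n := by
  haveI : Fact (Nat.Prime 2) := ⟨Nat.prime_two⟩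
  have hfr := GaloisField.finrank 2 (n := n) hn.ne'
  obtain ⟨α, hα⟩ := Field.exists_primitive_element_of_finite_top (ZMod 2) (GaloisField 2 n)
  refine ⟨minpoly (ZMod 2) α, minpoly.irreducible (IsIntegral.of_finite _ _), ?_⟩
  rw [(Field.primitive_element_iff_minpoly_natDegree_eq (ZMod 2) α).1 hα, hfr]

/-- The main membership lemma: an element of the family box avoiding all bad classes
gives an irreducible polynomial that is not shifted-Eisenstein with small height. -/
lemma goodMem (n H : ℕ) (hn : 2 < n) (g₀ : Polynomial (ZMod 2))
    (hg₀ : Irreducible g₀) (hg₀d : g₀.natDegree = n)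
    (a : Fin (n+1) → ℤ) (hafam : a ∈ famBox n H g₀)
    (hbad : ∀ p ∈ (Finset.Icc 3 H).filter Nat.Prime, a ∉ badP n H g₀ p) :
    toPoly n a ∈ irredSet n H \ CbarSet n H := by
  set f := toPoly n a with hfdef
  have h2i : ∀ i : Fin (n+1), ((a i : ZMod 2) = g₀.coeff i) ∧ -(H:ℤ) ≤ a i ∧ a i ≤ H := by
    intro i
    have := (Fintype.mem_piFinset.1 hafam) i
    simp only [coeffSet, Finset.mem_filter, Finset.mem_Icc] at this
    exact ⟨this.2, this.1.1, this.1.2⟩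
  have hfc : ∀ i : Fin (n+1), f.coeff i = a i := fun i => coeff_toPoly_lt n a i
  have hlc1 : g₀.coeff n = 1 := by
    have h := Polynomial.leadingCoeff_ne_zero.2 hg₀.ne_zero
    rw [Polynomial.leadingCoeff, hg₀d] at h
    have hall : ∀ u : ZMod 2, u ≠ 0 → u = 1 := by decide
    exact hall _ h
  have hcoeffn : (f.coeff n : ZMod 2) = 1 := by
    rw [show (n : ℕ) = ((⟨n, by omega⟩ : Fin (n+1)) : ℕ) from rfl, hfc, (h2i _).1]
    exact hlc1
  have hfcn : f.coeff n ≠ 0 := by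
    intro h
    rw [h] at hcoeffn
    simp at hcoeffn
  have hdeg : f.natDegree = n :=
    le_antisymm (natDegree_toPoly_le n a) (Polynomial.le_natDegree_of_ne_zero hfcn)
  have hheight : polyHeight f ≤ H := by
    rw [polyHeight, hdeg]
    apply Finset.sup_le
    intro i hi
    rw [Finset.mem_range] at hi
    have := h2i ⟨i, hi⟩
    rw [show f.coeff i = a ⟨i, hi⟩ from hfc ⟨i, hi⟩]
    omega
  have hmap2 : f.map (Int.castRingHom (ZMod 2)) = g₀ := by
    ext j
    rw [Polynomial.coeff_map, eq_intCast]
    rcases lt_or_ge j (n+1) with hj | hj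
    · rw [show f.coeff j = a ⟨j, hj⟩ from hfc ⟨j, hj⟩, (h2i ⟨j, hj⟩).1]
    · rw [Polynomial.coeff_eq_zero_of_natDegree_lt (by omega : f.natDegree < j),
        Polynomial.coeff_eq_zero_of_natDegree_lt (by omega : g₀.natDegree < j)]
      simp
  have hnoq : ∀ q : ℕ, q.Prime → q ≠ 2 → ¬ (∀ i, (q:ℤ) ∣ f.coeff i) := by
    intro q hq hq2 hall
    have hqn : (q:ℤ) ∣ f.coeff n := hall n
    have hq3 : 3 ≤ q := by
      have := hq.two_le
      omega
    have hqH : q ≤ H := by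
      have h1 : q ∣ (f.coeff n).natAbs := by
        rw [← Int.natAbs_natCast q]
        exact Int.natAbs_dvd_natAbs.2 hqn
      have h2 : (f.coeff n).natAbs ≤ H := by
        have := h2i ⟨n, by omega⟩
        rw [show f.coeff n = a ⟨n, by omega⟩ from hfc ⟨n, by omega⟩]
        omega
      have h3 : 0 < (f.coeff n).natAbs := Int.natAbs_pos.2 hfcn
      exact le_trans (Nat.le_of_dvd h3 h1) h2
    apply hbad q (Finset.mem_filter.2 ⟨Finset.mem_Icc.2 ⟨hq3, hqH⟩, hq⟩)
    apply mem_badP.2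
    refine ⟨hafam, 0, 0, ?_⟩
    intro i
    rw [map_zero, zero_mul, Polynomial.coeff_zero]
    rw [show (a i : ℤ) = f.coeff i from (hfc i).symm]
    exact (ZMod.intCast_zmod_eq_zero_iff_dvd _ q).2 (hall i)
  have hirr : Irreducible f := irred_of_conditions n hn f hdeg g₀ hg₀ hg₀d hmap2 hnoq
  constructor
  · exact ⟨hdeg, hheight, hirr⟩
  · intro hC
    obtain ⟨hd', hh', s, ⟨p, pp, hE⟩, hhs⟩ := hC
    obtain ⟨hmapf, hlcne, hdvd0, hne0⟩ :=
      eis_shift_structure f n (by omega) hdeg p s hE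
    have hmapf' : f.map (Int.castRingHom (ZMod p)) =
        C ((f.leadingCoeff : ZMod p)) * (X + C (-((s : ZMod p))))^n := by
      rw [hmapf, C_neg, ← sub_eq_add_neg]
    rcases eq_or_ne p 2 with rfl | hp2
    · -- p = 2 : contradiction with irreducibility of g₀
      rw [hmap2] at hmapf'
      have hlc1' : ((f.leadingCoeff : ZMod 2)) = 1 := by
        have hall : ∀ u : ZMod 2, u ≠ 0 → u = 1 := by decide
        exact hall _ hlcne
      rw [hlc1', map_one, one_mul] at hmapf'
      have hfact : g₀ = (X + C (-((s : ZMod 2))))^(n-1) * (X + C (-((s : ZMod 2)))) := by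
        rw [hmapf', ← pow_succ]
        congr 1
        omega
      rcases hg₀.isUnit_or_isUnit hfact with h | h
      · have := Polynomial.natDegree_eq_zero_of_isUnit h
        rw [Polynomial.natDegree_pow, Polynomial.natDegree_X_add_C] at this
        omega
      · have := Polynomial.natDegree_eq_zero_of_isUnit h
        rw [Polynomial.natDegree_X_add_C] at this
        exact one_ne_zero this
    · -- p odd : p ≤ H and a lands in badP p
      have hp3 : 3 ≤ p := by
        have := pp.two_le
        omega
      have hpH : p ≤ H := by
        have h1 : p ∣ ((f.comp (X + C s)).coeff 0).natAbs := by
          rw [← Int.natAbs_natCast p]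
          exact Int.natAbs_dvd_natAbs.2 hdvd0
        have h2 : ((f.comp (X + C s)).coeff 0).natAbs ≤ H := by
          refine le_trans ?_ hhs
          rw [polyHeight]
          exact Finset.le_sup (f := fun i => ((f.comp (X + C s)).coeff i).natAbs) (b := 0)
            (Finset.mem_range.2 (Nat.succ_pos _))
        have h3 : 0 < ((f.comp (X + C s)).coeff 0).natAbs := Int.natAbs_pos.2 hne0
        exact le_trans (Nat.le_of_dvd h3 h1) h2
      apply hbad p (Finset.mem_filter.2 ⟨Finset.mem_Icc.2 ⟨hp3, hpH⟩, pp⟩)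
      apply mem_badP.2
      refine ⟨hafam, (f.leadingCoeff : ZMod p), -((s : ZMod p)), ?_⟩
      intro i
      have := congrArg (fun q => Polynomial.coeff q (i : ℕ)) hmapf'
      simp only [Polynomial.coeff_map, eq_intCast] at this
      rw [show (a i : ℤ) = f.coeff i from (hfc i).symm]
      exact this

end ShiftEisAux

open ShiftEisAux Finset in
/-- For every `n > 2`: `liminf_{H→∞} #(I_n(H) \ C̄_n(H)) / #I_n(H) > 0`. -/
theorem liminf_irred_not_Cbar_pos (n : ℕ) (hn : 2 < n) :
    0 < liminf (fun H : ℕ =>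
        (Nat.card ↥(irredSet n H \ CbarSet n H) : ℝ) / (Nat.card (irredSet n H) : ℝ))
      atTop := by
  classical
  obtain ⟨g₀, hg₀, hg₀d⟩ := exists_irred_zmod2 n (by omega)
  set c : ℝ := (1/4) / 3^(n+1) with hc
  have hcpos : 0 < c := by rw [hc]; positivity
  -- finiteness and upper bound for the irreducible set
  have hIcount : ∀ H : ℕ, (irredSet n H).Finite ∧
      (irredSet n H).ncard ≤ (2*H+1)^(n+1) := by
    intro H
    set allBox : Finset (Fin (n+1) → ℤ) :=
      Fintype.piFinset (fun _ => Finset.Icc (-(H:ℤ)) H) with hallBox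
    have hsub : irredSet n H ⊆ ↑(allBox.image (toPoly n)) := by
      intro f hf
      obtain ⟨hdeg, hheight, _⟩ := hf
      have hco : ∀ i : ℕ, i < n + 1 → (f.coeff i).natAbs ≤ H := by
        intro i hi
        refine le_trans ?_ hheight
        rw [polyHeight, hdeg]
        exact Finset.le_sup (f := fun k => (f.coeff k).natAbs) (b := i) (Finset.mem_range.2 hi)
      simp only [Finset.coe_image, Set.mem_image, Finset.mem_coe]
      refine ⟨fun i => f.coeff i, ?_, toPoly_coeffs f n (le_of_eq hdeg)⟩
      rw [hallBox, Fintype.mem_piFinset]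
      intro i
      rw [Finset.mem_Icc]
      have := hco i i.isLt
      omega
    have hfin : (irredSet n H).Finite :=
      Set.Finite.subset (allBox.image (toPoly n)).finite_toSet hsub
    refine ⟨hfin, ?_⟩
    calc (irredSet n H).ncard ≤ ((allBox.image (toPoly n) : Finset (Polynomial ℤ)) : Set (Polynomial ℤ)).ncard :=
          Set.ncard_le_ncard hsub (allBox.image (toPoly n)).finite_toSet
      _ = (allBox.image (toPoly n)).card := Set.ncard_coe_finset _
      _ ≤ allBox.card := Finset.card_image_le
      _ = (2*H+1)^(n+1) := by
          rw [hallBox, Fintype.card_piFinset]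
          have : ∀ i : Fin (n+1), (Finset.Icc (-(H:ℤ)) H).card = 2*H+1 := by
            intro i
            rw [Int.card_Icc]
            omega
          rw [Finset.prod_congr rfl (fun i _ => this i), Finset.prod_const, Finset.card_univ,
            Fintype.card_fin]
    -- main estimate for large H
  set H₀ : ℕ := 18*(n+1)*2^(n+5) with hH₀
  have hmain : ∀ H : ℕ, H₀ ≤ H →
      c ≤ (Nat.card ↥(irredSet n H \ CbarSet n H) : ℝ) / (Nat.card (irredSet n H) : ℝ) := by
    intro H hH
    have hH1 : 1 ≤ H := by
      have h1 : 1 ≤ 2^(n+5) := Nat.one_le_two_pow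
      have h2 : 2^(n+5) ≤ H₀ := by
        rw [hH₀]
        calc 2^(n+5) = 1 * 2^(n+5) := (one_mul _).symm
          _ ≤ 18*(n+1) * 2^(n+5) := by
              apply Nat.mul_le_mul_right
              omega
      omega
    have hHR : (0:ℝ) < (H:ℝ) := by exact_mod_cast hH1
    set GBox : Finset (Fin (n+1) → ℤ) :=
      famBox n H g₀ \ ((Finset.Icc 3 H).filter Nat.Prime).biUnion (badP n H g₀) with hGBox
    -- lower bound on the cardinality of GBox
    have hGcard : (1/4 : ℝ) * (H:ℝ)^(n+1) ≤ (GBox.card : ℝ) := by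
      have hsubu : famBox n H g₀ ⊆
          GBox ∪ ((Finset.Icc 3 H).filter Nat.Prime).biUnion (badP n H g₀) := by
        intro a ha
        rw [Finset.mem_union, hGBox, Finset.mem_sdiff]
        by_cases hmem : a ∈ ((Finset.Icc 3 H).filter Nat.Prime).biUnion (badP n H g₀)
        · exact Or.inr hmem
        · exact Or.inl ⟨ha, hmem⟩
      have h1 : (famBox n H g₀).card ≤ GBox.card +
          ∑ p ∈ (Finset.Icc 3 H).filter Nat.Prime, (badP n H g₀ p).card := by
        calc (famBox n H g₀).card
            ≤ (GBox ∪ ((Finset.Icc 3 H).filter Nat.Prime).biUnion (badP n H g₀)).card :=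
              Finset.card_le_card hsubu
          _ ≤ GBox.card + (((Finset.Icc 3 H).filter Nat.Prime).biUnion (badP n H g₀)).card :=
              Finset.card_union_le _ _
          _ ≤ _ := by
              gcongr
              exact Finset.card_biUnion_le
      have h2 : ((famBox n H g₀).card : ℝ) ≤ (GBox.card : ℝ) +
          ∑ p ∈ (Finset.Icc 3 H).filter Nat.Prime, ((badP n H g₀ p).card : ℝ) := by
        exact_mod_cast h1
      have h3 := card_famBox_ge n H g₀
      have h4 := badsum_le n H hn g₀ (by rw [hH₀] at hH; exact hH)
      nlinarith
    -- membership
    have hgood : ∀ a ∈ GBox, toPoly n a ∈ irredSet n H \ CbarSet n H := by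
      intro a ha
      rw [hGBox, Finset.mem_sdiff] at ha
      refine goodMem n H hn g₀ hg₀ hg₀d a ha.1 ?_
      intro p hp hbadmem
      exact ha.2 (Finset.mem_biUnion.2 ⟨p, hp, hbadmem⟩)
    -- cardinalities
    obtain ⟨hIfin, hIle⟩ := hIcount H
    have hsubIC : ((GBox.image (toPoly n) : Finset (Polynomial ℤ)) : Set (Polynomial ℤ))
        ⊆ irredSet n H \ CbarSet n H := by
      intro f hf
      simp only [Finset.coe_image, Set.mem_image, Finset.mem_coe] at hf
      obtain ⟨a, ha, rfl⟩ := hf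
      exact hgood a ha
    have hICfin : (irredSet n H \ CbarSet n H).Finite := hIfin.subset Set.diff_subset
    have hnum : (GBox.card : ℝ) ≤ (Nat.card ↥(irredSet n H \ CbarSet n H) : ℝ) := by
      have h1 : GBox.card = (GBox.image (toPoly n)).card :=
        (Finset.card_image_of_injective _ (toPoly_injective n)).symm
      have h2 : ((GBox.image (toPoly n) : Finset (Polynomial ℤ)) : Set (Polynomial ℤ)).ncard
          ≤ (irredSet n H \ CbarSet n H).ncard :=
        Set.ncard_le_ncard hsubIC hICfin
      rw [Set.ncard_coe_finset] at h2
      rw [Nat.card_coe_set_eq]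
      exact_mod_cast h1 ▸ h2
    have hden : (Nat.card (irredSet n H) : ℝ) ≤ ((2*H+1 : ℕ):ℝ)^(n+1) := by
      rw [Nat.card_coe_set_eq]
      have hle : ((irredSet n H).ncard : ℝ) ≤ (((2*H+1)^(n+1) : ℕ) : ℝ) := by
        exact_mod_cast hIle
      push_cast at hle ⊢
      exact hle
    have hdenpos : (0:ℝ) < (Nat.card (irredSet n H) : ℝ) := by
      have h1 : (0:ℝ) < (Nat.card ↥(irredSet n H \ CbarSet n H) : ℝ) := by
        calc (0:ℝ) < (1/4 : ℝ) * (H:ℝ)^(n+1) := by positivity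
          _ ≤ (GBox.card : ℝ) := hGcard
          _ ≤ _ := hnum
      have h2 : (Nat.card ↥(irredSet n H \ CbarSet n H) : ℝ) ≤ (Nat.card (irredSet n H) : ℝ) := by
        rw [Nat.card_coe_set_eq, Nat.card_coe_set_eq]
        exact_mod_cast Set.ncard_le_ncard Set.diff_subset hIfin
      linarith
    -- ratio bound
    have h2H3H : ((2*H+1 : ℕ):ℝ) ≤ 3*(H:ℝ) := by
      have h1R : (1:ℝ) ≤ (H:ℝ) := by exact_mod_cast hH1
      push_cast
      linarith
    have hnum' : (1/4:ℝ) * (H:ℝ)^(n+1) ≤ (Nat.card ↥(irredSet n H \ CbarSet n H) : ℝ) :=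
      hGcard.trans hnum
    have hden' : (Nat.card (irredSet n H) : ℝ) ≤ (3*(H:ℝ))^(n+1) :=
      hden.trans (pow_le_pow_left₀ (by positivity) h2H3H _)
    have h3H : (0:ℝ) < 3^(n+1)*(H:ℝ)^(n+1) :=
      mul_pos (pow_pos (by norm_num) _) (pow_pos hHR _)
    calc c = ((1/4:ℝ) * (H:ℝ)^(n+1)) / ((3*(H:ℝ))^(n+1)) := by
          rw [hc, mul_pow, eq_div_iff h3H.ne']
          field_simp
      _ ≤ _ := div_le_div₀ (Nat.cast_nonneg _) hnum' hdenpos hden'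
  -- conclusion via liminf
  have hub : ∀ H : ℕ,
      (Nat.card ↥(irredSet n H \ CbarSet n H) : ℝ) / (Nat.card (irredSet n H) : ℝ) ≤ 1 := by
    intro H
    obtain ⟨hIfin, _⟩ := hIcount H
    have h2 : (Nat.card ↥(irredSet n H \ CbarSet n H) : ℝ) ≤ (Nat.card (irredSet n H) : ℝ) := by
      rw [Nat.card_coe_set_eq, Nat.card_coe_set_eq]
      exact_mod_cast Set.ncard_le_ncard Set.diff_subset hIfin
    apply div_le_one_of_le₀ h2 (Nat.cast_nonneg _)
  refine lt_of_lt_of_le hcpos (Filter.le_liminf_of_le ?_ ?_)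
  · exact Filter.isCoboundedUnder_ge_of_le atTop hub
  · exact Filter.eventually_atTop.2 ⟨H₀, hmain⟩
end
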